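/- arXiv:1506.06275 — 3 statements merged into one kernel-verified Lean document; each statement's English description precedes it below -/
import Mathlib

section
/- Last-use opacity does not support overwriting: for every prefix-closed set 𝓔 of histories, no history H ∈ 𝓔 that is last-use opaque with respect to 𝓔 contains transactions T_i and T_j such that T_i releases some variable x early in H, H|T_i contains write executions w_i(x,v)→ok_i and w_i(x,v')→ok_i with the former preceding the latter in H|T_i, and H|T_j contains a read execution r_j(x)→v that precedes w_i(x,v')→ok_i in H. -/
/-!
Formal model of transactional memory (TM) histories, following Siek &
Wojciechowski, "Last-use Opacity: A Strong Safety Property for Transactional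
Memory with Early Release Support".

Transactions and shared variables are indexed by natural numbers; values of
variables are natural numbers with initial value 0.
-/

namespace TM

open Classical

/-- Transactional operations: `init`, read of a variable, write of a value to
a variable, `tryCommit` and `tryAbort`. -/
inductive Op : Type
  | init : Op
  | read : ℕ → Op
  | write : ℕ → ℕ → Op
  | tryCommit : Op
  | tryAbort : Op
  deriving DecidableEq

/-- Responses: `ok`, a value (for reads), commit `C_i`, abort `A_i`. -/
inductive Resp : Type
  | ok : Resp
  | value : ℕ → Resp
  | committed : Resp
  | aborted : Resp
  deriving DecidableEq

/-- Invocation and response events, tagged with the transaction executing them. -/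
inductive Event : Type
  | inv : ℕ → Op → Event
  | res : ℕ → Resp → Event
  deriving DecidableEq

/-- The transaction executing an event. -/
def Event.txn : Event → ℕ
  | .inv t _ => t
  | .res t _ => t

/-- A history is a finite sequence of events. -/
abbrev History := List Event

/-- `proj i H` is `H|T_i`, the subsequence of events of transaction `i`. -/
def proj (i : ℕ) (H : History) : History :=
  H.filter (fun e => e.txn == i)

/-- Transaction `i` is in `H` (`H|T_i ≠ ∅`). -/
def inTxn (H : History) (i : ℕ) : Prop := proj i H ≠ []

/-- `T_i` is committed in `H`: `H|T_i` contains `tryC_i → C_i`. -/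
def committed (H : History) (i : ℕ) : Prop :=
  List.Sublist [Event.inv i Op.tryCommit, Event.res i Resp.committed] (proj i H)

/-- `T_i` is aborted in `H`: `H|T_i` contains a response `A_i`. -/
def aborted (H : History) (i : ℕ) : Prop :=
  Event.res i Resp.aborted ∈ proj i H

/-- `T_i` is commit-pending in `H`. -/
def commitPending (H : History) (i : ℕ) : Prop :=
  Event.inv i Op.tryCommit ∈ proj i H ∧
    Event.res i Resp.committed ∉ proj i H ∧ Event.res i Resp.aborted ∉ proj i H

/-- `T_i` is live in `H`. -/
def live (H : History) (i : ℕ) : Prop :=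
  inTxn H i ∧ ¬ committed H i ∧ ¬ aborted H i ∧ ¬ commitPending H i

/-- A complete operation execution by transaction `i` in `H`: the invocation
is at position `ki`, its matching response at position `kr` (no events of `i`
in between). -/
def opExec (H : History) (i ki kr : ℕ) (o : Op) (r : Resp) : Prop :=
  ki < kr ∧ H[ki]? = some (Event.inv i o) ∧ H[kr]? = some (Event.res i r) ∧
    ∀ (m : ℕ) (e : Event), ki < m → m < kr → H[m]? = some e → e.txn ≠ i

def isInvEvent : Event → Prop
  | .inv _ _ => True
  | .res _ _ => False

def isResEvent : Event → Prop
  | .inv _ _ => False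
  | .res _ _ => True

/-- Well-formedness of `H|T_i` (as the list `L`): alternation of invocations
and responses starting with `init_i`, no events after a commit/abort response,
and no invocation after an invocation of `tryC_i` or `tryA_i`. -/
def wellFormedTxn (L : History) (i : ℕ) : Prop :=
  (∀ (k : ℕ) (e : Event), L[k]? = some e →
      ((k % 2 = 0 → isInvEvent e) ∧ (k % 2 = 1 → isResEvent e))) ∧
  (L ≠ [] → L[0]? = some (Event.inv i Op.init)) ∧
  (∀ k : ℕ, (L[k]? = some (Event.res i Resp.committed) ∨
      L[k]? = some (Event.res i Resp.aborted)) → L.length = k + 1) ∧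
  (∀ (k : ℕ) (o : Op), L[k]? = some (Event.inv i o) → (o = Op.tryCommit ∨ o = Op.tryAbort) →
      ∀ (m : ℕ) (o' : Op), L[m]? = some (Event.inv i o') → m ≤ k)

/-- A well-formed history. -/
def wellFormed (H : History) : Prop :=
  ∀ i : ℕ, wellFormedTxn (proj i H) i

/-- Unique writes: distinct write executions write distinct values, all
different from the initial value 0. -/
def uniqueWrites (H : History) : Prop :=
  ∀ (k1 k2 i1 i2 x1 x2 v1 v2 : ℕ),
    H[k1]? = some (Event.inv i1 (Op.write x1 v1)) →
    H[k2]? = some (Event.inv i2 (Op.write x2 v2)) →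
    v1 ≠ 0 ∧ (k1 ≠ k2 → v1 ≠ v2)

/-- Two histories are equivalent if they agree on every `H|T_i`. -/
def equivH (H1 H2 : History) : Prop := ∀ i : ℕ, proj i H1 = proj i H2

/-- Real-time precedence: the last event of `H|T_i` precedes the first event
of `H|T_j` in `H`. -/
def rtPrec (H : History) (i j : ℕ) : Prop :=
  ∃ k l : ℕ, k < l ∧
    (∃ e : Event, H[k]? = some e ∧ e.txn = i) ∧
    (∃ e : Event, H[l]? = some e ∧ e.txn = j) ∧
    (∀ (m : ℕ) (e : Event), H[m]? = some e → e.txn = i → m ≤ k) ∧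
    (∀ (m : ℕ) (e : Event), H[m]? = some e → e.txn = j → l ≤ m)

/-- `S` preserves the real-time order of `H`. -/
def preservesRT (H S : History) : Prop := ∀ i j : ℕ, rtPrec H i j → rtPrec S i j

/-- A sequential history: any two distinct transactions are comparable in the
real-time order. -/
def sequential (S : History) : Prop :=
  ∀ i j : ℕ, inTxn S i → inTxn S j → i ≠ j → rtPrec S i j ∨ rtPrec S j i

/-- The read of value `v` on variable `x` invoked at position `ki` is
consistent with the sequential specification of `x`: the latest write to `x`
completed before it writes `v`, or there is no such write and `v = 0`. -/
def readsLegally (S : History) (x v ki : ℕ) : Prop :=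
  (∃ j kwi kwr : ℕ, kwr < ki ∧ opExec S j kwi kwr (Op.write x v) Resp.ok ∧
      ∀ j' v' kwi' kwr' : ℕ,
        opExec S j' kwi' kwr' (Op.write x v') Resp.ok → kwr' < ki → kwr' ≤ kwr)
  ∨ (v = 0 ∧ ∀ j v' kwi kwr : ℕ, opExec S j kwi kwr (Op.write x v') Resp.ok → ¬ kwr < ki)

/-- A (sequential) history is legal if its restriction to every variable is in
the variable's sequential specification, i.e. every complete read is
consistent with the latest preceding write. -/
def isLegal (S : History) : Prop :=
  ∀ i x v ki kr : ℕ, opExec S i ki kr (Op.read x) (Resp.value v) → readsLegally S x v ki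

/-- Transaction `i` has the pending (unanswered) invocation of `o` in `H`. -/
def pendingInv (H : History) (i : ℕ) (o : Op) : Prop :=
  (proj i H).getLast? = some (Event.inv i o)

/-- `C` is a completion `Compl(H)` of `H`. -/
def isCompletion (H C : History) : Prop :=
  H <+: C ∧
  (∀ i : ℕ, inTxn C i → inTxn H i) ∧
  (∀ i : ℕ, inTxn C i → committed C i ∨ aborted C i) ∧
  ∀ i : ℕ, inTxn H i →
    ((committed H i ∨ aborted H i) → proj i C = proj i H) ∧
    (¬ committed H i → ¬ aborted H i →
      (pendingInv H i Op.tryCommit →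
          proj i C = proj i H ++ [Event.res i Resp.committed]) ∧
      ((∃ o : Op, o ≠ Op.tryCommit ∧ pendingInv H i o) →
          proj i C = proj i H ++ [Event.res i Resp.aborted]) ∧
      ((¬ ∃ o : Op, pendingInv H i o) →
          proj i C = proj i H ++ [Event.inv i Op.tryCommit, Event.res i Resp.aborted]))

/-- Restriction of a history to the events of a set of transactions. -/
noncomputable def restrictTxns (S : History) (T : Set ℕ) : History :=
  S.filter (fun e => decide (e.txn ∈ T))

/-- `Vis(S,T_i)`: the longest subhistory of `S` containing, for each `T_j` in
`S`, the events of `T_j` iff `j = i` or (`T_j` is committed and `T_j ≺_S T_i`). -/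
noncomputable def Vis (S : History) (i : ℕ) : History :=
  restrictTxns S {j | j = i ∨ (committed S j ∧ rtPrec S j i)}

/-- `T_i` is legal in `S` if `Vis(S,T_i)` is legal. -/
def legalIn (S : History) (i : ℕ) : Prop := isLegal (Vis S i)

/-- Serializability. -/
def serializable (H : History) : Prop :=
  ∃ C S : History, isCompletion H C ∧ sequential S ∧ equivH S C ∧
    ∀ i : ℕ, inTxn S i → committed S i → legalIn S i

/-- The read invoked at position `ki` by `T_j` on `x` is non-local: no write
to `x` by `T_j` precedes it. -/
def nonLocalReadAt (H : History) (j x ki : ℕ) : Prop :=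
  ∀ m v : ℕ, m < ki → H[m]? ≠ some (Event.inv j (Op.write x v))

/-- `T_i` releases variable `x` early in `H`. -/
def releasesEarly (H : History) (i x : ℕ) : Prop :=
  ∃ P : History, P <+: H ∧ live P i ∧
    ∃ j v wki wkr rki rkr : ℕ, j ≠ i ∧
      opExec P i wki wkr (Op.write x v) Resp.ok ∧
      opExec P j rki rkr (Op.read x) (Resp.value v) ∧
      nonLocalReadAt P j x rki ∧
      wkr < rki

/-- Overwriting by `T_i` observed by `T_j` on variable `x` in `H`. -/
def overwriting (H : History) (i j x : ℕ) : Prop :=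
  i ≠ j ∧ releasesEarly H i x ∧
  ∃ v v' k1i k1r k2i k2r kri krr : ℕ,
    opExec H i k1i k1r (Op.write x v) Resp.ok ∧
    opExec H i k2i k2r (Op.write x v') Resp.ok ∧ k1r < k2i ∧
    opExec H j kri krr (Op.read x) (Resp.value v) ∧ krr < k2i

/-- Final-state opacity. -/
def finalStateOpaque (H : History) : Prop :=
  ∃ C S : History, isCompletion H C ∧ sequential S ∧ equivH S C ∧ preservesRT H S ∧
    ∀ i : ℕ, inTxn S i → legalIn S i

/-- Opacity: every finite prefix is final-state opaque. -/
def isOpaque (H : History) : Prop := ∀ P : History, P <+: H → finalStateOpaque P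

/-- Causal past of `T_i` in `H`: `T_i` together with the committed or aborted
transactions that precede `T_i` in `H`. -/
def causalPast (H : History) (i : ℕ) : Set ℕ :=
  {j | j = i ∨ ((committed H j ∨ aborted H j) ∧ rtPrec H j i)}

/-- Virtual world consistency. -/
def VWC (H : History) : Prop :=
  (∃ S : History, sequential S ∧ equivH S (restrictTxns H {j | committed H j}) ∧
      preservesRT H S ∧ ∀ j : ℕ, inTxn S j → committed S j → legalIn S j) ∧
  (∀ i : ℕ, inTxn H i → aborted H i →
      ∃ S : History, sequential S ∧ equivH S (restrictTxns H (causalPast H i)) ∧ isLegal S)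

/-! ### Live opacity -/

/-- Index `k` of `L` carries (part of) a read operation execution. -/
def isReadIdx (L : History) (k : ℕ) : Prop :=
  (∃ t x : ℕ, L[k]? = some (Event.inv t (Op.read x))) ∨
  (1 ≤ k ∧ (∃ t x : ℕ, L[k-1]? = some (Event.inv t (Op.read x))) ∧
    ∃ (t : ℕ) (r : Resp), L[k]? = some (Event.res t r))

/-- Index `k` of `L` carries (part of) a non-local read operation execution. -/
def isNonLocalReadIdx (L : History) (k : ℕ) : Prop :=
  (∃ t x : ℕ, L[k]? = some (Event.inv t (Op.read x)) ∧
      ∀ m t' v : ℕ, m < k → L[m]? ≠ some (Event.inv t' (Op.write x v))) ∨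
  (1 ≤ k ∧ (∃ (t : ℕ) (r : Resp), L[k]? = some (Event.res t r)) ∧
    ∃ t x : ℕ, L[k-1]? = some (Event.inv t (Op.read x)) ∧
      ∀ m t' v : ℕ, m < k - 1 → L[m]? ≠ some (Event.inv t' (Op.write x v)))

/-- The subsequence of `L` of events at indices satisfying `p`. -/
noncomputable def seqOfIdx (L : History) (p : ℕ → Prop) : History :=
  ((List.range L.length).filter (fun k => decide (p k))).filterMap (fun k => L[k]?)

/-- `H|(T_i,r)`: the read operation executions of `T_i`, excluding the last
read if its response is `A_i`. -/
noncomputable def readSeq (H : History) (i : ℕ) : History :=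
  let L := proj i H
  let R := seqOfIdx L (isReadIdx L)
  if R.getLast? = some (Event.res i Resp.aborted) then R.dropLast.dropLast else R

/-- `H|(T_i,gr)`: the non-local read operation executions of `T_i`, excluding
the last read if its response is `A_i`. -/
noncomputable def grSeq (H : History) (i : ℕ) : History :=
  let L := proj i H
  let R := seqOfIdx L (isNonLocalReadIdx L)
  if R.getLast? = some (Event.res i Resp.aborted) then R.dropLast.dropLast else R

/-- The transaction `T_i^gr`. -/
noncomputable def grTxn (H : History) (i : ℕ) : History :=
  if grSeq H i = [] then []
  else [Event.inv i Op.init, Event.res i Resp.ok] ++ grSeq H i ++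
       [Event.inv i Op.tryCommit, Event.res i Resp.committed]

/-- `S` justifies the serializability of `H`. -/
def justifiesSer (S H : History) : Prop :=
  ∃ H' : History, List.Sublist H' H ∧ (∀ e ∈ H', committed H e.txn) ∧
    (∀ j : ℕ, committed H j → proj j H' = proj j H) ∧
    isLegal S ∧ equivH S H'

/-- All complete local reads of `T_i` in `H` have legal responses: the last
preceding write of `T_i` to the variable wrote the value read. -/
def localReadsLegal (H : History) (i : ℕ) : Prop :=
  ∀ x v ki kr : ℕ, opExec (proj i H) i ki kr (Op.read x) (Resp.value v) →
    (∃ m w : ℕ, m < ki ∧ (proj i H)[m]? = some (Event.inv i (Op.write x w))) →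
    ∃ m : ℕ, m < ki ∧ (proj i H)[m]? = some (Event.inv i (Op.write x v)) ∧
      ∀ m' w' : ℕ, m < m' → m' < ki → (proj i H)[m']? ≠ some (Event.inv i (Op.write x w'))

/-- Live opacity. -/
def liveOpaque (H : History) : Prop :=
  ∃ S : History, sequential S ∧ preservesRT H S ∧ justifiesSer S H ∧
    (∃ S' : History, sequential S' ∧ List.Sublist S S' ∧
      (∀ i : ℕ, inTxn H i → ¬ inTxn S i → proj i S' = grTxn H i) ∧
      (∀ i j : ℕ, rtPrec H i j → inTxn S' i → inTxn S' j → rtPrec S' i j) ∧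
      isLegal S') ∧
    (∀ i : ℕ, inTxn H i → ¬ inTxn S i → localReadsLegal H i)

/-! ### Last-use opacity -/

/-- A prefix-closed set of histories (the possible histories of a program). -/
def prefixClosed (E : Set History) : Prop :=
  ∀ H ∈ E, ∀ P : History, P <+: H → P ∈ E

/-- The write execution on `x` by `T_i` at positions `(ki,kr)` is the closing
("last") write on `x` by `T_i` in `H` with respect to the possible histories
`E`: in no extension of `H` in `E` does `T_i` invoke another write on `x`
after it. -/
def closingWrite (E : Set History) (H : History) (i x v ki kr : ℕ) : Prop :=
  opExec H i ki kr (Op.write x v) Resp.ok ∧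
  ∀ H' ∈ E, H <+: H' → ∀ m v' : ℕ, H'[m]? = some (Event.inv i (Op.write x v')) → m ≤ ki

/-- `T_i` decided on `x` in `H` (w.r.t. `E`). -/
def decidedOn (E : Set History) (H : History) (i x : ℕ) : Prop :=
  ∃ v ki kr : ℕ, closingWrite E H i x v ki kr

/-- The variable accessed by an operation. -/
def opVar : Op → Option ℕ
  | .read x => some x
  | .write x _ => some x
  | _ => none

/-- The variable accessed by the event at index `k` of `L` (for a response,
the variable of the matching invocation at `k-1`). -/
def eventVarAt (L : History) (k : ℕ) : Option ℕ :=
  match L[k]? with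
  | some (Event.inv _ o) => opVar o
  | some (Event.res _ _) =>
      match L[k-1]? with
      | some (Event.inv _ o) => opVar o
      | _ => none
  | none => none

/-- The operation execution starting at index `k` of `L` is complete. -/
def completeAt (L : History) (k : ℕ) : Prop :=
  ∀ (t : ℕ) (o : Op), L[k]? = some (Event.inv t o) →
    ∃ (t' : ℕ) (r : Resp), L[k+1]? = some (Event.res t' r)

/-- `Hs⌊T_i` (decided transaction subhistory): the subsequence of `Hs|T_i`
consisting of `init_i` and all complete operation executions on variables on
which `T_i` decided (decidedness judged in `Hd` w.r.t. `E`). -/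
noncomputable def lastUseProj (E : Set History) (Hd Hs : History) (i : ℕ) : History :=
  let L := proj i Hs
  seqOfIdx L (fun k => completeAt L k ∧
    (k ≤ 1 ∨ ∃ x : ℕ, eventVarAt L k = some x ∧ decidedOn E Hd i x))

/-- `Hs⌊^T_i = Hs⌊T_i · [tryC_i → C_i]`. -/
noncomputable def lastUseProjC (E : Set History) (Hd Hs : History) (i : ℕ) : History :=
  lastUseProj E Hd Hs i ++ [Event.inv i Op.tryCommit, Event.res i Resp.committed]

/-- Transactions of a history in order of first occurrence. -/
def txnOrder : History → List ℕ
  | [] => []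
  | e :: t => e.txn :: (txnOrder t).filter (fun j => j ≠ e.txn)

/-- The candidate `LUVis(S,T_i)` determined by a choice `inc` of which decided
non-committed transactions to include: for each transaction `j` of `S` in
order, all of `S|T_j` if `j = i` or `T_j` is committed in `S` and `T_j ≺_S T_i`;
`S⌊^T_j` if `T_j` is non-committed, decided on some variable in `H`,
`T_j ≺_S T_i`, not `T_j ≺_H T_i`, and `inc j` holds; nothing otherwise. -/
noncomputable def buildLUVis (E : Set History) (H S : History) (i : ℕ)
    (inc : ℕ → Prop) : History :=
  (txnOrder S).flatMap (fun j =>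
    if j = i ∨ (committed S j ∧ rtPrec S j i) then proj j S
    else if ¬ committed S j ∧ (∃ x : ℕ, decidedOn E H j x) ∧ rtPrec S j i ∧
        ¬ rtPrec H j i ∧ inc j
      then lastUseProjC E H S j
    else [])

/-- `T_i` is last-use legal in `S`: some admissible `LUVis(S,T_i)` is legal. -/
def lastUseLegal (E : Set History) (H S : History) (i : ℕ) : Prop :=
  ∃ inc : ℕ → Prop, isLegal (buildLUVis E H S i inc)

/-- Final-state last-use opacity with respect to `E`. -/
def finalStateLUOpaque (E : Set History) (H : History) : Prop :=
  ∃ C S : History, isCompletion H C ∧ sequential S ∧ equivH S C ∧ preservesRT H S ∧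
    (∀ i : ℕ, inTxn S i → committed S i → legalIn S i) ∧
    (∀ i : ℕ, inTxn S i → ¬ committed S i → lastUseLegal E H S i)

/-- Last-use opacity with respect to `E`: every finite prefix is final-state
last-use opaque with respect to `E`. -/
def lastUseOpaque (E : Set History) (H : History) : Prop :=
  ∀ P : History, P <+: H → finalStateLUOpaque E P

/-! ### Database conditions -/

/-- `T_j` reads from `T_i` in `H` (unique writes). -/
def readsFrom (H : History) (j i : ℕ) : Prop :=
  ∃ x v kwi kwr kri krr : ℕ,
    opExec H i kwi kwr (Op.write x v) Resp.ok ∧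
    opExec H j kri krr (Op.read x) (Resp.value v)

/-- Recoverability: if `T_j` reads from `T_i` then `T_i` commits before `T_j`
commits. -/
def recoverable (H : History) : Prop :=
  ∀ i j : ℕ, i ≠ j → readsFrom H j i →
    ∀ kc' : ℕ, H[kc']? = some (Event.res j Resp.committed) →
      ∃ kc : ℕ, kc < kc' ∧ H[kc]? = some (Event.res i Resp.committed)

/-- Avoiding cascading aborts: whenever `T_j` reads `x` from `T_i`, the commit
response `C_i` precedes the read. -/
def ACA (H : History) : Prop :=
  ∀ i j x v kwi kwr kri krr : ℕ, i ≠ j →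
    opExec H i kwi kwr (Op.write x v) Resp.ok →
    opExec H j kri krr (Op.read x) (Resp.value v) →
    ∃ m : ℕ, m < kri ∧ H[m]? = some (Event.res i Resp.committed)

/-- Strictness. -/
def strictH (H : History) : Prop :=
  ∀ i j : ℕ, i ≠ j → ∀ x v v' ki kr kwi kwr : ℕ,
    (opExec H i ki kr (Op.read x) (Resp.value v) ∨ opExec H i ki kr (Op.write x v') Resp.ok) →
    opExec H j kwi kwr (Op.write x v) Resp.ok →
    kwr < ki →
    ∃ m : ℕ, m < ki ∧
      (H[m]? = some (Event.res j Resp.committed) ∨ H[m]? = some (Event.res j Resp.aborted))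

end TM

namespace TM

open Classical

section AuxLemmas

variable {α : Type*}

lemma aux_getElem?_of_prefix {l1 l2 : List α} {k : ℕ} {a : α}
    (h : l1 <+: l2) (hk : l1[k]? = some a) : l2[k]? = some a := by
  obtain ⟨r, rfl⟩ := h
  have hlt := (List.getElem?_eq_some_iff.mp hk).1
  rw [List.getElem?_append, if_pos hlt]; exact hk

lemma aux_getElem?_prefix_rev {l1 l2 : List α} {k : ℕ} {a : α}
    (h : l1 <+: l2) (hlt : k < l1.length) (hk : l2[k]? = some a) : l1[k]? = some a := by
  obtain ⟨r, rfl⟩ := h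
  rwa [List.getElem?_append, if_pos hlt] at hk

lemma aux_exists_getElem?_of_mem {l : List α} {a : α} (h : a ∈ l) : ∃ n : ℕ, l[n]? = some a := by
  obtain ⟨n, hn, rfl⟩ := List.getElem_of_mem h
  exact ⟨n, List.getElem?_eq_getElem hn⟩

lemma aux_getLast?_mem {l : List α} {a : α} (h : l.getLast? = some a) : a ∈ l := by
  obtain ⟨h', rfl⟩ := List.mem_getLast?_eq_getLast (by rw [h]; rfl)
  exact List.getLast_mem h'

lemma aux_one_lt_length {l : List α} {a b : α} (ha : a ∈ l) (hb : b ∈ l) (hne : a ≠ b) :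
    1 < l.length := by
  match l with
  | [] => simp at ha
  | [x] =>
    simp only [List.mem_singleton] at ha hb
    exact absurd (ha.trans hb.symm) hne
  | x :: y :: u => simp only [List.length_cons]; omega

lemma aux_filter_head_back (p : α → Bool) :
    ∀ (L : List α) (b : α), (L.filter p)[0]? = some b →
      ∃ kb : ℕ, L[kb]? = some b ∧ ∀ (m : ℕ) (e : α), m < kb → L[m]? = some e → p e = false := by
  intro L
  induction L with
  | nil => intro b hb; simp at hb
  | cons x tl ih =>
    intro b hb
    by_cases hx : p x = true
    · rw [List.filter_cons_of_pos hx, List.getElem?_cons_zero] at hb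
      injection hb with hb; subst hb
      exact ⟨0, List.getElem?_cons_zero, fun m e hm => by omega⟩
    · rw [List.filter_cons_of_neg hx] at hb
      obtain ⟨kb, h1, h2⟩ := ih b hb
      refine ⟨kb + 1, by rw [List.getElem?_cons_succ]; exact h1, ?_⟩
      intro m e hm he
      match m with
      | 0 =>
        rw [List.getElem?_cons_zero] at he; injection he with he; subst he
        exact Bool.eq_false_iff.mpr hx
      | m' + 1 =>
        rw [List.getElem?_cons_succ] at he
        exact h2 m' e (by omega) he

lemma aux_filter_head_fwd (p : α → Bool) :
    ∀ (L : List α) (c : ℕ) (b : α), L[c]? = some b → p b = true →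
      (∀ (m : ℕ) (e : α), m < c → L[m]? = some e → p e = false) → (L.filter p)[0]? = some b := by
  intro L
  induction L with
  | nil => intro c b hb; simp at hb
  | cons x tl ih =>
    intro c b hb hpb hmid
    match c with
    | 0 =>
      rw [List.getElem?_cons_zero] at hb; injection hb with hb; subst hb
      rw [List.filter_cons_of_pos hpb, List.getElem?_cons_zero]
    | c' + 1 =>
      have hx : p x = false := hmid 0 x (Nat.succ_pos _) List.getElem?_cons_zero
      rw [List.filter_cons_of_neg (by simp [hx])]
      rw [List.getElem?_cons_succ] at hb
      exact ih c' b hb hpb (fun m e hm he => hmid (m + 1) e (by omega)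
        (by rw [List.getElem?_cons_succ]; exact he))

lemma aux_filter_adj_fwd (p : α → Bool) :
    ∀ (L : List α) (a b : ℕ) (ea eb : α), a < b → L[a]? = some ea → L[b]? = some eb →
      p ea = true → p eb = true →
      (∀ (m : ℕ) (e : α), a < m → m < b → L[m]? = some e → p e = false) →
      ∃ n : ℕ, (L.filter p)[n]? = some ea ∧ (L.filter p)[n + 1]? = some eb := by
  intro L
  induction L with
  | nil => intro a b ea eb _ h; simp at h
  | cons x tl ih =>
    intro a b ea eb hab ha hb hpa hpb hmid
    match a with
    | 0 =>
      rw [List.getElem?_cons_zero] at ha; injection ha with ha; subst ha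
      obtain ⟨b', rfl⟩ : ∃ b', b = b' + 1 := ⟨b - 1, by omega⟩
      rw [List.getElem?_cons_succ] at hb
      refine ⟨0, ?_, ?_⟩
      · rw [List.filter_cons_of_pos hpa, List.getElem?_cons_zero]
      · rw [List.filter_cons_of_pos hpa, List.getElem?_cons_succ]
        exact aux_filter_head_fwd p tl b' eb hb hpb
          (fun m e hm he => hmid (m + 1) e (by omega) (by omega)
            (by rw [List.getElem?_cons_succ]; exact he))
    | a' + 1 =>
      obtain ⟨b', rfl⟩ : ∃ b', b = b' + 1 := ⟨b - 1, by omega⟩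
      rw [List.getElem?_cons_succ] at ha hb
      obtain ⟨n, h1, h2⟩ := ih a' b' ea eb (by omega) ha hb hpa hpb
        (fun m e hm1 hm2 he => hmid (m + 1) e (by omega) (by omega)
          (by rw [List.getElem?_cons_succ]; exact he))
      by_cases hx : p x = true
      · exact ⟨n + 1, by rw [List.filter_cons_of_pos hx, List.getElem?_cons_succ]; exact h1,
          by rw [List.filter_cons_of_pos hx, List.getElem?_cons_succ]; exact h2⟩
      · exact ⟨n, by rw [List.filter_cons_of_neg hx]; exact h1,
          by rw [List.filter_cons_of_neg hx]; exact h2⟩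

lemma aux_filter_adj_back (p : α → Bool) :
    ∀ (L : List α) (n : ℕ) (ea eb : α),
      (L.filter p)[n]? = some ea → (L.filter p)[n + 1]? = some eb →
      ∃ a b : ℕ, a < b ∧ L[a]? = some ea ∧ L[b]? = some eb ∧
        ∀ (m : ℕ) (e : α), a < m → m < b → L[m]? = some e → p e = false := by
  intro L
  induction L with
  | nil => intro n ea eb h; simp at h
  | cons x tl ih =>
    intro n ea eb ha hb
    by_cases hx : p x = true
    · rw [List.filter_cons_of_pos hx] at ha hb
      match n with
      | 0 =>
        rw [List.getElem?_cons_zero] at ha; injection ha with ha; subst ha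
        rw [List.getElem?_cons_succ] at hb
        obtain ⟨kb, h1, h2⟩ := aux_filter_head_back p tl eb hb
        refine ⟨0, kb + 1, by omega, List.getElem?_cons_zero,
          by rw [List.getElem?_cons_succ]; exact h1, ?_⟩
        intro m e hm1 hm2 he
        obtain ⟨m', rfl⟩ : ∃ m', m = m' + 1 := ⟨m - 1, by omega⟩
        rw [List.getElem?_cons_succ] at he
        exact h2 m' e (by omega) he
      | n' + 1 =>
        rw [List.getElem?_cons_succ] at ha hb
        obtain ⟨a, b, h1, h2, h3, h4⟩ := ih n' ea eb ha hb
        refine ⟨a + 1, b + 1, by omega, by rw [List.getElem?_cons_succ]; exact h2,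
          by rw [List.getElem?_cons_succ]; exact h3, ?_⟩
        intro m e hm1 hm2 he
        obtain ⟨m', rfl⟩ : ∃ m', m = m' + 1 := ⟨m - 1, by omega⟩
        rw [List.getElem?_cons_succ] at he
        exact h4 m' e (by omega) (by omega) he
    · rw [List.filter_cons_of_neg hx] at ha hb
      obtain ⟨a, b, h1, h2, h3, h4⟩ := ih n ea eb ha hb
      refine ⟨a + 1, b + 1, by omega, by rw [List.getElem?_cons_succ]; exact h2,
        by rw [List.getElem?_cons_succ]; exact h3, ?_⟩
      intro m e hm1 hm2 he
      obtain ⟨m', rfl⟩ : ∃ m', m = m' + 1 := ⟨m - 1, by omega⟩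
      rw [List.getElem?_cons_succ] at he
      exact h4 m' e (by omega) (by omega) he

lemma aux_flatMap_single {g : ℕ → History} {l : List ℕ} {j : ℕ}
    (hnd : l.Nodup) (hj : j ∈ l) (hg : ∀ t ∈ l, t ≠ j → g t = []) :
    l.flatMap g = g j := by
  induction l with
  | nil => simp at hj
  | cons a tl ih =>
    rw [List.flatMap_cons]
    rcases List.mem_cons.mp hj with rfl | hj'
    · have h0 : tl.flatMap g = [] := by
        rw [List.flatMap_eq_nil_iff]
        intro t ht
        exact hg t (List.mem_cons_of_mem _ ht)
          (fun h => (List.nodup_cons.mp hnd).1 (h ▸ ht))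
      rw [h0, List.append_nil]
    · have ha : g a = [] := hg a List.mem_cons_self
        (by rintro rfl; exact (List.nodup_cons.mp hnd).1 hj')
      rw [ha, List.nil_append]
      exact ih (List.nodup_cons.mp hnd).2 hj'
        (fun t ht => hg t (List.mem_cons_of_mem _ ht))

lemma aux_filter_flatMap (p : Event → Bool) (g : ℕ → History) :
    ∀ l : List ℕ, (l.flatMap g).filter p = l.flatMap (fun t => (g t).filter p) := by
  intro l
  induction l with
  | nil => simp
  | cons a tl ih => simp [List.flatMap_cons, List.filter_append, ih]

end AuxLemmas

lemma txnOrder_nodup : ∀ L : History, (txnOrder L).Nodup := by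
  intro L
  induction L with
  | nil => simp [txnOrder]
  | cons e tl ih =>
    rw [txnOrder]
    refine List.nodup_cons.mpr ⟨?_, ih.filter _⟩
    intro h
    have := List.of_mem_filter h
    simp at this

lemma mem_txnOrder : ∀ (L : History) (j : ℕ), j ∈ txnOrder L ↔ ∃ e ∈ L, e.txn = j := by
  intro L
  induction L with
  | nil => simp [txnOrder]
  | cons e tl ih =>
    intro j
    simp only [txnOrder, List.mem_cons, List.mem_filter, ih, decide_eq_true_eq]
    constructor
    · rintro (rfl | ⟨⟨e', he', rfl⟩, -⟩)
      · exact ⟨e, Or.inl rfl, rfl⟩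
      · exact ⟨e', Or.inr he', rfl⟩
    · rintro ⟨e', (rfl | he'), rfl⟩
      · exact Or.inl rfl
      · by_cases h : e'.txn = e.txn
        · exact Or.inl h
        · exact Or.inr ⟨⟨e', he', rfl⟩, h⟩

lemma opExec_to_adj {L : History} {t a b : ℕ} {o : Op} {r : Resp}
    (h : opExec L t a b o r) :
    ∃ n, (proj t L)[n]? = some (Event.inv t o) ∧ (proj t L)[n + 1]? = some (Event.res t r) := by
  obtain ⟨hab, ha, hb, hmid⟩ := h
  exact aux_filter_adj_fwd _ L a b _ _ hab ha hb (by simp [Event.txn]) (by simp [Event.txn])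
    (fun m e hm1 hm2 he => by
      simp only [beq_eq_false_iff_ne, ne_eq]
      exact hmid m e hm1 hm2 he)

lemma adj_to_opExec {L : History} {t n : ℕ} {o : Op} {r : Resp}
    (ha : (proj t L)[n]? = some (Event.inv t o))
    (hb : (proj t L)[n + 1]? = some (Event.res t r)) :
    ∃ a b, opExec L t a b o r := by
  simp only [proj] at ha hb
  obtain ⟨a, b, h1, h2, h3, h4⟩ := aux_filter_adj_back _ L n _ _ ha hb
  refine ⟨a, b, h1, h2, h3, fun m e hm1 hm2 he => ?_⟩
  have := h4 m e hm1 hm2 he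
  simp only [beq_eq_false_iff_ne, ne_eq] at this
  exact this

lemma wfTxn_prefix {L L' : History} {i : ℕ} (h : L' <+: L) (hwf : wellFormedTxn L i) :
    wellFormedTxn L' i := by
  obtain ⟨h1, h2, h3, h4⟩ := hwf
  refine ⟨fun k e hk => h1 k e (aux_getElem?_of_prefix h hk), fun hne => ?_, fun k hk => ?_,
    fun k o hk ho m o' hm =>
      h4 k o (aux_getElem?_of_prefix h hk) ho m o' (aux_getElem?_of_prefix h hm)⟩
  · obtain ⟨e, he⟩ : ∃ e, L'[0]? = some e := by
      match L', hne with
      | a :: t, _ => exact ⟨a, List.getElem?_cons_zero⟩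
    have heL := aux_getElem?_of_prefix h he
    have hLne : L ≠ [] := by
      intro hL; rw [hL] at heL; simp at heL
    have : e = Event.inv i Op.init := Option.some_inj.mp (heL.symm.trans (h2 hLne))
    rw [he, this]
  · have hkL : L[k]? = some (Event.res i Resp.committed) ∨
        L[k]? = some (Event.res i Resp.aborted) := by
      rcases hk with hk | hk
      exacts [Or.inl (aux_getElem?_of_prefix h hk), Or.inr (aux_getElem?_of_prefix h hk)]
    have hlen := h3 k hkL
    have hk' : k < L'.length := by
      rcases hk with hk | hk
      exacts [(List.getElem?_eq_some_iff.mp hk).1, (List.getElem?_eq_some_iff.mp hk).1]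
    have hle : L'.length ≤ L.length := h.length_le
    omega

lemma mem_completion {P C : History} (hcomp : isCompletion P C) :
    ∀ e ∈ C, e ∈ P ∨ e = Event.inv e.txn Op.tryCommit ∨
      e = Event.res e.txn Resp.committed ∨ e = Event.res e.txn Resp.aborted := by
  intro e he
  have hepC : e ∈ proj e.txn C := List.mem_filter.mpr ⟨he, by simp⟩
  have hinC : inTxn C e.txn := by
    intro h; rw [h] at hepC; simp at hepC
  have hinP : inTxn P e.txn := hcomp.2.1 e.txn hinC
  obtain ⟨h1, h2⟩ := hcomp.2.2.2 e.txn hinP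
  by_cases hca : committed P e.txn ∨ aborted P e.txn
  · left; rw [h1 hca] at hepC; exact (List.mem_filter.mp hepC).1
  push_neg at hca
  obtain ⟨h3, h4, h5⟩ := h2 hca.1 hca.2
  by_cases hp : pendingInv P e.txn Op.tryCommit
  · rw [h3 hp] at hepC
    rcases List.mem_append.mp hepC with h | h
    · left; exact (List.mem_filter.mp h).1
    · right; right; left; simpa using h
  by_cases hp2 : ∃ o, pendingInv P e.txn o
  · obtain ⟨o, ho⟩ := hp2
    have hne : o ≠ Op.tryCommit := fun h => hp (h ▸ ho)
    rw [h4 ⟨o, hne, ho⟩] at hepC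
    rcases List.mem_append.mp hepC with h | h
    · left; exact (List.mem_filter.mp h).1
    · right; right; right; simpa using h
  · rw [h5 hp2] at hepC
    rcases List.mem_append.mp hepC with h | h
    · left; exact (List.mem_filter.mp h).1
    · rcases List.mem_cons.mp h with h' | h'
      · right; left; conv_lhs => rw [h']
      · right; right; right; simpa using h'

lemma writer_in_S {H P C S : History} {i x v k1i : ℕ}
    (huw : uniqueWrites H) (hP : P <+: H)
    (h1 : H[k1i]? = some (Event.inv i (Op.write x v)))
    (hcomp : isCompletion P C) (heqv : equivH S C) :
    ∀ t' : ℕ, Event.inv t' (Op.write x v) ∈ S → t' = i := by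
  intro t' hmem
  have hmemC : Event.inv t' (Op.write x v) ∈ C := by
    have h : Event.inv t' (Op.write x v) ∈ proj t' S :=
      List.mem_filter.mpr ⟨hmem, by simp [Event.txn]⟩
    rw [heqv t'] at h
    exact (List.mem_filter.mp h).1
  rcases mem_completion hcomp _ hmemC with h | h | h | h
  · obtain ⟨k, hk⟩ := aux_exists_getElem?_of_mem h
    have hkH := aux_getElem?_of_prefix hP hk
    have huw' := huw k k1i t' i x x v v hkH h1
    by_cases hkk : k = k1i
    · subst hkk
      have := hkH.symm.trans h1
      injection Option.some_inj.mp this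
    · exact absurd rfl (huw'.2 hkk)
  · simp at h
  · simp at h
  · simp at h

/-- My own mirror of the branch function of `buildLUVis`. -/
noncomputable def branchF (E : Set History) (H S : History) (i : ℕ) (inc : ℕ → Prop)
    (j : ℕ) : History :=
  if j = i ∨ (committed S j ∧ rtPrec S j i) then proj j S
  else if ¬ committed S j ∧ (∃ x : ℕ, decidedOn E H j x) ∧ rtPrec S j i ∧
      ¬ rtPrec H j i ∧ inc j
    then lastUseProjC E H S j
  else []

lemma buildLUVis_eq (E : Set History) (H S : History) (i : ℕ) (inc : ℕ → Prop) :
    buildLUVis E H S i inc = (txnOrder S).flatMap (branchF E H S i inc) := rfl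

lemma txn_of_mem_branchF {E : Set History} {H S : History} {i : ℕ} {inc : ℕ → Prop}
    {t : ℕ} {e : Event} (he : e ∈ branchF E H S i inc t) : e.txn = t := by
  rw [branchF] at he
  split_ifs at he with h1 h2
  · simpa using (List.mem_filter.mp he).2
  · rcases List.mem_append.mp he with h | h
    · simp only [lastUseProj, seqOfIdx] at h
      obtain ⟨k, -, hk⟩ := List.mem_filterMap.mp h
      simpa using (List.mem_filter.mp (List.mem_of_getElem? hk)).2
    · rcases List.mem_cons.mp h with h' | h'
      · rw [h']; rfl
      · rw [List.mem_singleton.mp h']; rfl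
  · simp at he

/-- Last-use opacity does not support overwriting: no
last-use opaque history contains a transaction that releases a variable `x`
early, writes to `x` twice, with another transaction reading the first value
before the second write. -/
theorem lastUse_opacity_does_not_support_overwriting
    (E : Set History) (hE : prefixClosed E) (H : History) (hH : H ∈ E)
    (hwf : wellFormed H) (huw : uniqueWrites H)
    (hlu : lastUseOpaque E H) :
    ∀ i j x : ℕ, ¬ overwriting H i j x := by
  intro i j x hov
  obtain ⟨hij, -, v, v', k1i, k1r, k2i, k2r, kri, krr, hw1, hw2, h12, hrd, hrk⟩ := hov
  obtain ⟨h1lt, h1i, h1r, h1mid⟩ := hw1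
  obtain ⟨h2lt, h2i, h2r, h2mid⟩ := hw2
  obtain ⟨hrlt, hri, hrr, hrmid⟩ := hrd
  set P := H.take k2i with hPdef
  have hPpre : P <+: H := List.take_prefix _ _
  have hk2len : k2i < H.length := (List.getElem?_eq_some_iff.mp h2i).1
  have hPlen : P.length = k2i := by rw [hPdef, List.length_take]; omega
  have hPget : ∀ (k : ℕ) (e : Event), k < k2i → H[k]? = some e → P[k]? = some e :=
    fun k e hk he => aux_getElem?_prefix_rev hPpre (by omega) he
  obtain ⟨C, S, hcomp, hseq, heqv, hrt, hcommleg, hncleg⟩ := hlu P hPpre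
  -- basic facts about the first write and the read inside `P`
  have hvne : v ≠ 0 := (huw k1i k1i i i x x v v h1i h1i).1
  have hw1iP : P[k1i]? = some (Event.inv i (Op.write x v)) := hPget _ _ (by omega) h1i
  have hw1rP : P[k1r]? = some (Event.res i Resp.ok) := hPget _ _ (by omega) h1r
  have hrdP : opExec P j kri krr (Op.read x) (Resp.value v) :=
    ⟨hrlt, hPget _ _ (by omega) hri, hPget _ _ (by omega) hrr,
      fun m e hm1 hm2 he => hrmid m e hm1 hm2 (aux_getElem?_of_prefix hPpre he)⟩
  have hw1memP : Event.inv i (Op.write x v) ∈ proj i P :=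
    List.mem_filter.mpr ⟨List.mem_of_getElem? hw1iP, by simp [Event.txn]⟩
  have hw1rmemP : Event.res i Resp.ok ∈ proj i P :=
    List.mem_filter.mpr ⟨List.mem_of_getElem? hw1rP, by simp [Event.txn]⟩
  have hinPi : inTxn P i := by
    intro h; rw [h] at hw1memP; simp at hw1memP
  -- the second write invocation is not in `P`
  have hw2notP : Event.inv i (Op.write x v') ∉ P := by
    intro hmem
    obtain ⟨k, hk⟩ := aux_exists_getElem?_of_mem hmem
    have hklt : k < k2i := by
      have := (List.getElem?_eq_some_iff.mp hk).1; omega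
    exact (huw k k2i i i x x v' v' (aux_getElem?_of_prefix hPpre hk) h2i).2 (by omega) rfl
  have hpiH := hwf i
  have hwfP : wellFormedTxn (proj i P) i := wfTxn_prefix (hPpre.filter _) (hwf i)
  have hpiPpre : proj i P <+: proj i H := hPpre.filter _
  have hw2proj : Event.inv i (Op.write x v') ∈ proj i H :=
    List.mem_filter.mpr ⟨List.mem_of_getElem? h2i, by simp [Event.txn]⟩
  have hbig : ∀ m : ℕ, (proj i H)[m]? = some (Event.inv i (Op.write x v')) →
      (proj i P).length ≤ m := by
    intro m hm
    by_contra hcon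
    push_neg at hcon
    have hmem : (proj i P)[m]? = some (Event.inv i (Op.write x v')) :=
      aux_getElem?_prefix_rev hpiPpre hcon hm
    exact hw2notP (List.mem_filter.mp (List.mem_of_getElem? hmem)).1
  -- `T_i` has no `tryCommit` invocation and no terminal response in `P`
  have htcnot : Event.inv i Op.tryCommit ∉ proj i P := by
    intro hmem
    obtain ⟨k, hk⟩ := aux_exists_getElem?_of_mem hmem
    obtain ⟨m, hm⟩ := aux_exists_getElem?_of_mem hw2proj
    have hle := hpiH.2.2.2 k Op.tryCommit (aux_getElem?_of_prefix hpiPpre hk) (Or.inl rfl)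
      m (Op.write x v') hm
    have h3 : k < (proj i P).length := (List.getElem?_eq_some_iff.mp hk).1
    have h4 := hbig m hm
    omega
  have htermnot : ∀ r : Resp, r = Resp.committed ∨ r = Resp.aborted →
      Event.res i r ∉ proj i P := by
    intro r hr hmem
    obtain ⟨k, hk⟩ := aux_exists_getElem?_of_mem hmem
    have hkH := aux_getElem?_of_prefix hpiPpre hk
    have hlen : (proj i H).length = k + 1 := hpiH.2.2.1 k (by
      rcases hr with rfl | rfl
      exacts [Or.inl hkH, Or.inr hkH])
    obtain ⟨m, hm⟩ := aux_exists_getElem?_of_mem hw2proj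
    have h2 := hbig m hm
    have h3 : k < (proj i P).length := (List.getElem?_eq_some_iff.mp hk).1
    have h4 : m < (proj i H).length := (List.getElem?_eq_some_iff.mp hm).1
    have h5 : (proj i P).length ≤ (proj i H).length := hpiPpre.length_le
    omega
  have hcommP : ¬ committed P i := fun h => htermnot _ (Or.inl rfl) (h.subset (by simp))
  have habtP : ¬ aborted P i := fun h => htermnot _ (Or.inr rfl) h
  have hpendnot : ¬ pendingInv P i Op.tryCommit := fun h => htcnot (aux_getLast?_mem h)
  -- shape of `proj i C` and non-commitment of `T_i` in `S`
  have hprojiC : proj i C = proj i P ++ [Event.res i Resp.aborted] ∨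
      proj i C = proj i P ++ [Event.inv i Op.tryCommit, Event.res i Resp.aborted] := by
    obtain ⟨hA, hB⟩ := hcomp.2.2.2 i hinPi
    obtain ⟨hB1, hB2, hB3⟩ := hB hcommP habtP
    by_cases hp : ∃ o, pendingInv P i o
    · obtain ⟨o, ho⟩ := hp
      exact Or.inl (hB2 ⟨o, fun h => hpendnot (h ▸ ho), ho⟩)
    · exact Or.inr (hB3 hp)
  have hcommSi : ¬ committed S i := by
    intro h
    have h' : Event.res i Resp.committed ∈ proj i S := h.subset (by simp)
    rw [heqv i] at h'
    rcases hprojiC with he | he <;> rw [he] at h' <;>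
      rcases List.mem_append.mp h' with h'' | h''
    · exact htermnot _ (Or.inl rfl) h''
    · simp at h''
    · exact htermnot _ (Or.inl rfl) h''
    · simp at h''
  -- first two entries of `proj i S` agree with `proj i P`
  have hgetiS : ∀ (m : ℕ), m < (proj i P).length → (proj i S)[m]? = (proj i P)[m]? := by
    intro m hm
    rw [heqv i]
    rcases hprojiC with he | he <;> rw [he, List.getElem?_append, if_pos hm]
  -- the read of `T_j` is adjacent in `proj j S`
  obtain ⟨n, hn1, hn2⟩ := opExec_to_adj hrdP
  have hinPj : inTxn P j := by
    intro h; rw [h] at hn1; simp at hn1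
  have hprojjpre : proj j P <+: proj j S := by
    rw [heqv j]
    obtain ⟨hA, hB⟩ := hcomp.2.2.2 j hinPj
    by_cases hca : committed P j ∨ aborted P j
    · rw [hA hca]
    · push_neg at hca
      obtain ⟨hB1, hB2, hB3⟩ := hB hca.1 hca.2
      by_cases hp : pendingInv P j Op.tryCommit
      · rw [hB1 hp]; exact List.prefix_append _ _
      by_cases hp2 : ∃ o, pendingInv P j o
      · obtain ⟨o, ho⟩ := hp2
        rw [hB2 ⟨o, fun h => hp (h ▸ ho), ho⟩]; exact List.prefix_append _ _
      · rw [hB3 hp2]; exact List.prefix_append _ _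
  have hn1S : (proj j S)[n]? = some (Event.inv j (Op.read x)) :=
    aux_getElem?_of_prefix hprojjpre hn1
  have hn2S : (proj j S)[n + 1]? = some (Event.res j (Resp.value v)) :=
    aux_getElem?_of_prefix hprojjpre hn2
  have hinSj : inTxn S j := by
    intro h; rw [h] at hn1S; simp at hn1S
  have hreadmemS : Event.inv j (Op.read x) ∈ S :=
    (List.mem_filter.mp (List.mem_of_getElem? hn1S)).1
  have honlyi : ∀ t' : ℕ, Event.inv t' (Op.write x v) ∈ S → t' = i :=
    writer_in_S huw hPpre h1i hcomp heqv
  by_cases hcj : committed S j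
  · -- `T_j` committed in `S`: use legality of `Vis S j`
    have hleg : isLegal (Vis S j) := hcommleg j hinSj hcj
    have hVisproj : proj j (Vis S j) = proj j S := by
      simp only [Vis, restrictTxns, proj, List.filter_filter]
      apply List.filter_congr
      intro e he
      by_cases hpe : e.txn = j
      · simp [hpe, Set.mem_setOf_eq]
      · simp [hpe]
    obtain ⟨ka, kb, hop⟩ := adj_to_opExec (t := j) (L := Vis S j)
      (by rw [hVisproj]; exact hn1S) (by rw [hVisproj]; exact hn2S)
    rcases hleg j x v ka kb hop with ⟨t', kwi, kwr, hlt', hwop, -⟩ | ⟨hv0, -⟩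
    · have hmemVis : Event.inv t' (Op.write x v) ∈ Vis S j := List.mem_of_getElem? hwop.2.1
      simp only [Vis, restrictTxns] at hmemVis
      have hmem := List.mem_filter.mp hmemVis
      have ht'i : t' = i := honlyi t' hmem.1
      have hmem2 := hmem.2
      simp only [decide_eq_true_eq, Event.txn, Set.mem_setOf_eq] at hmem2
      rw [ht'i] at hmem2
      rcases hmem2 with h | h
      · exact hij h
      · exact hcommSi h.1
    · exact hvne hv0
  · -- `T_j` not committed in `S`: use last-use legality
    obtain ⟨inc, hleg⟩ := hncleg j hinSj hcj
    rw [buildLUVis_eq] at hleg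
    set B := (txnOrder S).flatMap (branchF E P S j inc) with hBdef
    have hprojB : proj j B = proj j S := by
      have hsingle := aux_flatMap_single
        (g := fun t => (branchF E P S j inc t).filter (fun e => e.txn == j))
        (txnOrder_nodup S) ((mem_txnOrder S j).mpr ⟨_, hreadmemS, rfl⟩) ?side
      case side =>
        intro t ht hne
        rw [List.filter_eq_nil_iff]
        intro e he
        have hetxn := txn_of_mem_branchF he
        simp [hetxn, hne]
      simp only [proj, hBdef, aux_filter_flatMap]
      rw [hsingle]
      have hbr : branchF E P S j inc j = proj j S := by
        rw [branchF, if_pos (Or.inl rfl)]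
      show List.filter (fun e => e.txn == j) (branchF E P S j inc j) =
        List.filter (fun e => e.txn == j) S
      have hself : List.filter (fun e => e.txn == j) (proj j S) = proj j S :=
        List.filter_eq_self.mpr (fun e he => (List.mem_filter.mp he).2)
      rw [hbr, hself]
      rfl
    obtain ⟨ka, kb, hop⟩ := adj_to_opExec (t := j) (L := B)
      (by rw [hprojB]; exact hn1S) (by rw [hprojB]; exact hn2S)
    rcases hleg j x v ka kb hop with ⟨t', kwi, kwr, hlt', hwop, -⟩ | ⟨hv0, -⟩
    · have hmemB : Event.inv t' (Op.write x v) ∈ B := List.mem_of_getElem? hwop.2.1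
      rw [hBdef] at hmemB
      obtain ⟨t, htmem, hef⟩ := List.mem_flatMap.mp hmemB
      have htt : t' = t := txn_of_mem_branchF hef
      subst htt
      rw [branchF] at hef
      split_ifs at hef with hc1 hc2
      · have heS : Event.inv t' (Op.write x v) ∈ S := (List.mem_filter.mp hef).1
        have ht'i : t' = i := honlyi t' heS
        rw [ht'i] at hc1
        rcases hc1 with h | h
        · exact hij h
        · exact hcommSi h.1
      · rcases List.mem_append.mp hef with h | h
        · simp only [lastUseProj, seqOfIdx] at h
          obtain ⟨k, hk1, hk2⟩ := List.mem_filterMap.mp h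
          have heS : Event.inv t' (Op.write x v) ∈ S :=
            (List.mem_filter.mp (List.mem_of_getElem? hk2)).1
          have ht'i : t' = i := honlyi t' heS
          have hpredb := (List.mem_filter.mp hk1).2
          simp only [decide_eq_true_eq] at hpredb
          rw [ht'i] at hk2 hpredb
          rcases hpredb.2 with hk01 | ⟨x', hvar, hdec⟩
          · -- the write cannot be among the first two events of `proj i S`
            have hne12 : Event.inv i (Op.write x v) ≠ Event.res i Resp.ok := by simp
            have hlen2 : 1 < (proj i P).length :=
              aux_one_lt_length hw1memP hw1rmemP hne12
            rcases Nat.le_one_iff_eq_zero_or_eq_one.mp hk01 with rfl | rfl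
            · rw [hgetiS 0 (by omega)] at hk2
              have h0 : (proj i P)[0]? = some (Event.inv i Op.init) :=
                hwfP.2.1 (by intro hc; rw [hc] at hw1memP; simp at hw1memP)
              have := h0.symm.trans hk2
              simp at this
            · rw [hgetiS 1 (by omega)] at hk2
              exact (hwfP.1 1 _ hk2).2 rfl
          · -- `T_i` decided on `x` in `P`: impossible, second write comes later
            have hx' : x' = x := by
              simp only [eventVarAt, hk2, opVar] at hvar
              exact (Option.some_inj.mp hvar).symm
            subst hx'
            obtain ⟨v0, ki0, kr0, hwop0, hclose⟩ := hdec
            have hk2le : k2i ≤ ki0 := hclose H hH hPpre k2i v' h2i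
            have hkr0 : kr0 < P.length := (List.getElem?_eq_some_iff.mp hwop0.2.2.1).1
            have hki0 : ki0 < kr0 := hwop0.1
            omega
        · simp at h
      · simp at hef
    · exact hvne hv0

end TM
end

section
/- Last-use opacity supports aborting early release: there exist a prefix-closed set 𝓔 of histories and a history H ∈ 𝓔 such that H is last-use opaque with respect to 𝓔 and H contains a transaction T_i that releases some variable early in H and whose subhistory H|T_i contains the abort response A_i. -/
namespace TM

open Classical

/-! ### Auxiliary development for Statement 13 -/

/-- Shorthand events. -/
def E0 : Event := .inv 1 .init
def E1 : Event := .res 1 .ok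
def E2 : Event := .inv 2 .init
def E3 : Event := .res 2 .ok
def E4 : Event := .inv 1 (.write 0 1)
def E5 : Event := .res 1 .ok
def E6 : Event := .inv 2 (.read 0)
def E7 : Event := .res 2 (.value 1)
def E8 : Event := .inv 1 .tryAbort
def E9 : Event := .res 1 .aborted
def C1E : Event := .inv 1 .tryCommit
def A1E : Event := .res 1 .aborted
def C2E : Event := .inv 2 .tryCommit
def A2E : Event := .res 2 .aborted

/-- The example history. -/
def Hex : History := [E0, E1, E2, E3, E4, E5, E6, E7, E8, E9]

/-- The example set of histories: all prefixes of `Hex`. -/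
def EE : Set History := {P | P <+: Hex}

/-- Boolean event classifiers. -/
def isWr : Event → Bool
  | .inv _ (.write _ _) => true
  | _ => false

def isRd : Event → Bool
  | .inv _ (.read _) => true
  | _ => false

def isVal : Event → Bool
  | .res _ (.value _) => true
  | _ => false

def isTCA : Event → Bool
  | .inv _ .tryCommit => true
  | .inv _ .tryAbort => true
  | _ => false

def isInvB : Event → Bool
  | .inv _ _ => true
  | _ => false

def isCom : Event → Bool
  | .res _ .committed => true
  | _ => false

def isAb : Event → Bool
  | .res _ .aborted => true
  | _ => false

instance : DecidablePred isInvEvent := fun e =>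
  match e with
  | .inv _ _ => isTrue trivial
  | .res _ _ => isFalse (fun h => h)

instance : DecidablePred isResEvent := fun e =>
  match e with
  | .inv _ _ => isFalse (fun h => h)
  | .res _ _ => isTrue trivial

instance (L : History) (i : ℕ) : Decidable (inTxn L i) :=
  inferInstanceAs (Decidable (proj i L ≠ []))

instance (H : History) (i : ℕ) : Decidable (aborted H i) :=
  inferInstanceAs (Decidable (Event.res i Resp.aborted ∈ proj i H))

instance (H : History) (i : ℕ) (o : Op) : Decidable (pendingInv H i o) :=
  inferInstanceAs (Decidable ((proj i H).getLast? = some (Event.inv i o)))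

lemma all_idx {L : History} {Q : ℕ → Event → Prop}
    (h : ∀ (m : ℕ) (hm : m < L.length), Q m L[m]) :
    ∀ (m : ℕ) (e : Event), L[m]? = some e → Q m e := by
  intro m e hme
  obtain ⟨hm, he⟩ := List.getElem?_eq_some_iff.mp hme
  exact he ▸ h m hm

lemma no_com {S : History} (h : ∀ e ∈ S, isCom e = false) :
    ∀ i : ℕ, ¬ committed S i := by
  intro i hc
  have hm1 : Event.res i Resp.committed ∈ proj i S := hc.subset (by simp)
  have hm : Event.res i Resp.committed ∈ S := List.mem_of_mem_filter hm1
  have := h _ hm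
  simp [isCom] at this

lemma isLegal_noval {L : History} (h : ∀ e ∈ L, isVal e = false) : isLegal L := by
  intro i x v ki kr hop
  have := h _ (List.mem_of_getElem? hop.2.2.1)
  simp [isVal] at this

lemma inTxn_mem {L : History} {i : ℕ} (h : inTxn L i) : ∃ e ∈ L, e.txn = i := by
  unfold inTxn proj at h
  obtain ⟨e, he⟩ := List.exists_mem_of_ne_nil _ h
  exact ⟨e, List.mem_of_mem_filter he, by simpa using List.of_mem_filter he⟩

lemma inTxn_12 {L : History} {i : ℕ} (hu : ∀ e ∈ L, e.txn = 1 ∨ e.txn = 2)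
    (h : inTxn L i) : i = 1 ∨ i = 2 := by
  obtain ⟨e, he, ht⟩ := inTxn_mem h
  rcases hu e he with h' | h'
  · left; omega
  · right; omega

lemma rtPrec_irrefl {P : History} {i : ℕ} : ¬ rtPrec P i i := by
  rintro ⟨k, l, hkl, ⟨e, hk, he⟩, -, -, h2⟩
  have := h2 k e hk he
  omega

lemma rtPrec_txn_left {P : History} {i j : ℕ} (h : rtPrec P i j) :
    ∃ e ∈ P, e.txn = i := by
  obtain ⟨k, l, -, ⟨e, hk, he⟩, -⟩ := h
  exact ⟨e, List.mem_of_getElem? hk, he⟩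

lemma rtPrec_txn_right {P : History} {i j : ℕ} (h : rtPrec P i j) :
    ∃ e ∈ P, e.txn = j := by
  obtain ⟨k, l, -, -, ⟨e, hl, he⟩, -⟩ := h
  exact ⟨e, List.mem_of_getElem? hl, he⟩

lemma no_rt_21 {P : History} (h0 : ∃ e, P[0]? = some e ∧ e.txn = 1) :
    ¬ rtPrec P 2 1 := by
  rintro ⟨k, l, hkl, -, -, -, h2⟩
  obtain ⟨e, h0, he⟩ := h0
  have := h2 0 e h0 he
  omega

lemma pre_get {P Q : History} (h : P <+: Q) {m : ℕ} {e : Event}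
    (hm : P[m]? = some e) : Q[m]? = some e := by
  obtain ⟨t, rfl⟩ := h
  rw [List.getElem?_append_left (List.getElem?_eq_some_iff.mp hm).1]
  exact hm

lemma proj_nil_univ {L : History} {i : ℕ} (hu : ∀ e ∈ L, e.txn = 1 ∨ e.txn = 2)
    (h1 : i ≠ 1) (h2 : i ≠ 2) : proj i L = [] := by
  apply List.filter_eq_nil_iff.mpr
  intro a ha
  rcases hu a ha with h' | h' <;> simp [h', beq_iff_eq] <;> omega

lemma mk_rt12 {S : History} (k : ℕ)
    (hk : ∃ e, S[k]? = some e ∧ e.txn = 1)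
    (hl : ∃ e, S[k + 1]? = some e ∧ e.txn = 2)
    (h1 : ∀ (m : ℕ) (e : Event), S[m]? = some e → e.txn = 1 → m ≤ k)
    (h2 : ∀ (m : ℕ) (e : Event), S[m]? = some e → e.txn = 2 → k + 1 ≤ m) :
    rtPrec S 1 2 :=
  ⟨k, k + 1, by omega, hk, hl, h1, h2⟩

lemma mk_seq {S : History} (hu : ∀ e ∈ S, e.txn = 1 ∨ e.txn = 2)
    (h12 : rtPrec S 1 2) : sequential S := by
  intro i j hi hj hne
  rcases inTxn_12 hu hi with rfl | rfl <;> rcases inTxn_12 hu hj with rfl | rfl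
  · exact absurd rfl hne
  · exact Or.inl h12
  · exact Or.inr h12
  · exact absurd rfl hne

lemma mk_seq1 {S : History} (hu : ∀ e ∈ S, e.txn = 1) : sequential S := by
  intro i j hi hj hne
  obtain ⟨e, he, ht⟩ := inTxn_mem hi
  obtain ⟨e', he', ht'⟩ := inTxn_mem hj
  have := hu e he
  have := hu e' he'
  omega

lemma mk_prt1 {P S : History} (hu : ∀ e ∈ P, e.txn = 1) : preservesRT P S := by
  intro i j h
  obtain ⟨e, he, ht⟩ := rtPrec_txn_left h
  obtain ⟨e', he', ht'⟩ := rtPrec_txn_right h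
  have h1 := hu e he
  have h2 := hu e' he'
  have : i = j := by omega
  subst this
  exact absurd h rtPrec_irrefl

lemma mk_prt {P S : History} (hu : ∀ e ∈ P, e.txn = 1 ∨ e.txn = 2)
    (h0 : ∃ e, P[0]? = some e ∧ e.txn = 1)
    (h12 : rtPrec S 1 2) : preservesRT P S := by
  intro i j h
  obtain ⟨e, he, ht⟩ := rtPrec_txn_left h
  obtain ⟨e', he', ht'⟩ := rtPrec_txn_right h
  have hi : i = 1 ∨ i = 2 := by rcases hu e he with h' | h' <;> omega
  have hj : j = 1 ∨ j = 2 := by rcases hu e' he' with h' | h' <;> omega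
  rcases hi with rfl | rfl <;> rcases hj with rfl | rfl
  · exact absurd h rtPrec_irrefl
  · exact h12
  · exact absurd h (no_rt_21 h0)
  · exact absurd h rtPrec_irrefl

lemma no_pend {P : History} {i : ℕ} (h : ∃ j r, (proj i P).getLast? = some (Event.res j r)) :
    ∀ o : Op, ¬ pendingInv P i o := by
  obtain ⟨j, r, h⟩ := h
  intro o hp
  unfold pendingInv at hp
  rw [h] at hp
  simp at hp

lemma writeBound : ∀ H' ∈ EE, ∀ (m v' : ℕ),
    H'[m]? = some (Event.inv 1 (Op.write 0 v')) → m ≤ 4 := by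
  intro H' hH' m v' hm
  have hg : Hex[m]? = some (Event.inv 1 (Op.write 0 v')) := pre_get hH' hm
  have h4 := all_idx (L := Hex) (Q := fun m e => isWr e = true → m = 4)
    (by decide) m _ hg rfl
  omega

lemma decided_1_0 {P : History} (h4 : P[4]? = some E4) (h5 : P[5]? = some E5) :
    decidedOn EE P 1 0 :=
  ⟨1, 4, 5,
    ⟨by omega, h4, h5, fun m e h1 h2 _ => absurd h1 (by omega)⟩,
    fun H' hH' _ m v' hm => writeBound H' hH' m v' hm⟩

lemma completeAt_of_next {L : History} {k : ℕ}
    (h : ∃ t r, L[k + 1]? = some (Event.res t r)) : completeAt L k :=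
  fun _ _ _ => h

lemma completeAt_of_res {L : History} {k : ℕ}
    (h : ∃ t r, L[k]? = some (Event.res t r)) : completeAt L k := by
  obtain ⟨t, r, h⟩ := h
  intro t' o' h'
  rw [h] at h'
  simp at h'

lemma lup_comp (E : Set History) (Hd S : History) (y z : Event)
    (hproj : proj 1 S = [E0, E1, E4, E5, y, z])
    (hy : eventVarAt [E0, E1, E4, E5, y, z] 4 = none)
    (hz : eventVarAt [E0, E1, E4, E5, y, z] 5 = none)
    (hd : decidedOn E Hd 1 0) :
    lastUseProj E Hd S 1 = [E0, E1, E4, E5] := by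
  show seqOfIdx (proj 1 S) (fun k => completeAt (proj 1 S) k ∧
    (k ≤ 1 ∨ ∃ x : ℕ, eventVarAt (proj 1 S) k = some x ∧ decidedOn E Hd 1 x)) = _
  rw [hproj]
  set L : History := [E0, E1, E4, E5, y, z] with hL
  set p : ℕ → Prop := fun k => completeAt L k ∧
    (k ≤ 1 ∨ ∃ x : ℕ, eventVarAt L k = some x ∧ decidedOn E Hd 1 x) with hp
  have dp0 : @decide (p 0) (propDecidable _) = true :=
    @decide_eq_true _ (propDecidable _) ⟨completeAt_of_next ⟨1, .ok, rfl⟩, Or.inl (by omega)⟩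
  have dp1 : @decide (p 1) (propDecidable _) = true :=
    @decide_eq_true _ (propDecidable _) ⟨completeAt_of_res ⟨1, .ok, rfl⟩, Or.inl (by omega)⟩
  have dp2 : @decide (p 2) (propDecidable _) = true :=
    @decide_eq_true _ (propDecidable _) ⟨completeAt_of_next ⟨1, .ok, rfl⟩, Or.inr ⟨0, rfl, hd⟩⟩
  have dp3 : @decide (p 3) (propDecidable _) = true :=
    @decide_eq_true _ (propDecidable _) ⟨completeAt_of_res ⟨1, .ok, rfl⟩, Or.inr ⟨0, rfl, hd⟩⟩
  have dp4 : @decide (p 4) (propDecidable _) = false := by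
    apply @decide_eq_false _ (propDecidable _)
    rintro ⟨-, h | ⟨x, hx, -⟩⟩
    · omega
    · rw [hy] at hx; cases hx
  have dp5 : @decide (p 5) (propDecidable _) = false := by
    apply @decide_eq_false _ (propDecidable _)
    rintro ⟨-, h | ⟨x, hx, -⟩⟩
    · omega
    · rw [hz] at hx; cases hx
  unfold seqOfIdx
  have hrange : List.range L.length = [0, 1, 2, 3, 4, 5] := by
    rw [hL]; rfl
  rw [hrange]
  have hfil : List.filter (fun k => @decide (p k) (propDecidable _)) [0, 1, 2, 3, 4, 5] = [0, 1, 2, 3] := by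
    simp only [List.filter_cons, dp0, dp1, dp2, dp3, dp4, dp5]
    rfl
  exact (congrArg (List.filterMap (fun k => L[k]?)) hfil).trans rfl

lemma luvis_T1_only {E : Set History} {P S : History} {inc : ℕ → Prop}
    (hord : txnOrder S = [1]) : buildLUVis E P S 1 inc = proj 1 S := by
  unfold buildLUVis
  rw [hord]
  simp only [List.flatMap_cons, List.flatMap_nil, List.append_nil]
  have hC : True ∨ (committed S 1 ∧ rtPrec S 1 1) := Or.inl trivial
  rw [if_pos hC]

lemma luvis_T1_two {E : Set History} {P S : History}
    (hord : txnOrder S = [1, 2]) (hnc2 : ¬ committed S 2) :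
    buildLUVis E P S 1 (fun _ => False) = proj 1 S := by
  unfold buildLUVis
  rw [hord]
  simp only [List.flatMap_cons, List.flatMap_nil, List.append_nil]
  have hC : True ∨ (committed S 1 ∧ rtPrec S 1 1) := Or.inl trivial
  have hA : ¬((2 : ℕ) = 1 ∨ (committed S 2 ∧ rtPrec S 2 1)) := by
    rintro (h | ⟨h, -⟩)
    · omega
    · exact hnc2 h
  have hB : ¬(¬ committed S 2 ∧ (∃ x : ℕ, decidedOn E P 2 x) ∧ rtPrec S 2 1 ∧
      ¬ rtPrec P 2 1 ∧ False) := by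
    rintro ⟨-, -, -, -, h⟩
    exact h
  rw [if_pos hC, if_neg hA, if_neg hB, List.append_nil]

lemma luvis_T2_two {E : Set History} {P S : History}
    (hord : txnOrder S = [1, 2]) (hnc1 : ¬ committed S 1) :
    buildLUVis E P S 2 (fun _ => False) = proj 2 S := by
  unfold buildLUVis
  rw [hord]
  simp only [List.flatMap_cons, List.flatMap_nil, List.append_nil]
  have hC : True ∨ (committed S 2 ∧ rtPrec S 2 2) := Or.inl trivial
  have hA : ¬((1 : ℕ) = 2 ∨ (committed S 1 ∧ rtPrec S 1 2)) := by
    rintro (h | ⟨h, -⟩)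
    · omega
    · exact hnc1 h
  have hB : ¬(¬ committed S 1 ∧ (∃ x : ℕ, decidedOn E P 1 x) ∧ rtPrec S 1 2 ∧
      ¬ rtPrec P 1 2 ∧ False) := by
    rintro ⟨-, -, -, -, h⟩
    exact h
  rw [if_neg hA, if_neg hB, if_pos hC, List.nil_append]

lemma luvis_hard {E : Set History} {P S : History}
    (hord : txnOrder S = [1, 2]) (hnc1 : ¬ committed S 1)
    (hd : decidedOn E P 1 0) (hrtS : rtPrec S 1 2) (hrtP : ¬ rtPrec P 1 2) :
    buildLUVis E P S 2 (fun j => j = 1) = lastUseProjC E P S 1 ++ proj 2 S := by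
  unfold buildLUVis
  rw [hord]
  simp only [List.flatMap_cons, List.flatMap_nil, List.append_nil]
  have hC : True ∨ (committed S 2 ∧ rtPrec S 2 2) := Or.inl trivial
  have hA : ¬((1 : ℕ) = 2 ∨ (committed S 1 ∧ rtPrec S 1 2)) := by
    rintro (h | ⟨h, -⟩)
    · omega
    · exact hnc1 h
  have hB : ¬ committed S 1 ∧ (∃ x : ℕ, decidedOn E P 1 x) ∧ rtPrec S 1 2 ∧
      ¬ rtPrec P 1 2 ∧ True := ⟨hnc1, ⟨0, hd⟩, hrtS, hrtP, trivial⟩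
  rw [if_neg hA, if_pos hB, if_pos hC]

/-- The final visibility list used to justify `T_2`'s read. -/
def Lfin : History := [E0, E1, E4, E5, C1E, Event.res 1 Resp.committed,
  E2, E3, E6, E7, C2E, A2E]

lemma isLegal_final : isLegal Lfin := by
  intro i x v ki kr hop
  obtain ⟨hlt, hki, hkr, hbet⟩ := hop
  have hki8 : ki = 8 :=
    all_idx (L := Lfin) (Q := fun m e => isRd e = true → m = 8) (by decide) ki _ hki rfl
  subst hki8
  have h8 : Lfin[8]? = some (Event.inv 2 (Op.read 0)) := by decide
  rw [h8] at hki
  obtain ⟨rfl, rfl⟩ : i = 2 ∧ x = 0 := by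
    have := hki
    simp only [Option.some.injEq, Event.inv.injEq, Op.read.injEq] at this
    exact ⟨this.1.symm, this.2.symm⟩
  have hkr9 : kr = 9 :=
    all_idx (L := Lfin) (Q := fun m e => isVal e = true → m = 9) (by decide) kr _ hkr rfl
  subst hkr9
  have h9 : Lfin[9]? = some (Event.res 2 (Resp.value 1)) := by decide
  rw [h9] at hkr
  obtain rfl : v = 1 := by
    have := hkr
    simp only [Option.some.injEq, Event.res.injEq, Resp.value.injEq] at this
    exact this.2.symm
  refine Or.inl ⟨1, 2, 3, by omega, ⟨by omega, by decide, by decide,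
    fun m e h1 h2 _ => absurd h1 (by omega)⟩, ?_⟩
  intro j' v' kwi' kwr' hop' hlt'
  obtain ⟨h1', h2', h3', h4'⟩ := hop'
  have hw2 : kwi' = 2 :=
    all_idx (L := Lfin) (Q := fun m e => isWr e = true → m = 2) (by decide) kwi' _ h2' rfl
  subst hw2
  have h2c : Lfin[2]? = some (Event.inv 1 (Op.write 0 1)) := by decide
  rw [h2c] at h2'
  obtain ⟨rfl, rfl⟩ : j' = 1 ∧ v' = 1 := by
    have := h2'
    simp only [Option.some.injEq, Event.inv.injEq, Op.write.injEq] at this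
    exact ⟨this.1.symm, this.2.2.symm⟩
  by_contra hgt
  push_neg at hgt
  exact h4' 3 (Event.res 1 Resp.ok) (by omega) (by omega) (by decide) rfl


lemma fso0 : finalStateLUOpaque EE [] := by
  refine ⟨[], [], ?_, ?_, ?_, ?_, ?_, ?_⟩
  · exact ⟨List.prefix_refl _, fun i hi => absurd rfl hi, fun i hi => absurd rfl hi,
      fun i hi => absurd rfl hi⟩
  · intro i j hi hj hne; exact absurd rfl hi
  · intro i; rfl
  · intro i j h
    obtain ⟨e, he, -⟩ := rtPrec_txn_left h
    exact absurd he List.not_mem_nil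
  · intro i hi; exact absurd rfl hi
  · intro i hi; exact absurd rfl hi

lemma fso1 : finalStateLUOpaque EE [E0] := by
  refine ⟨[E0, A1E], [E0, A1E], ?_, ?_, ?_, ?_, ?_, ?_⟩
  · refine ⟨⟨[A1E], rfl⟩, ?_, ?_, ?_⟩
    · intro i hi
      rcases inTxn_12 (by decide) hi with rfl | rfl
      · decide
      · exact absurd hi (by decide)
    · intro i hi
      rcases inTxn_12 (by decide) hi with rfl | rfl
      · exact Or.inr (by decide)
      · exact absurd hi (by decide)
    · intro i hi
      rcases inTxn_12 (by decide) hi with rfl | rfl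
      · refine ⟨?_, ?_⟩
        · rintro (h | h)
          · exact absurd h (no_com (by decide) 1)
          · exact absurd h (by decide)
        · intro _ _
          refine ⟨?_, ?_, ?_⟩
          · intro hp; exact absurd hp (by decide)
          · intro _; decide
          · intro hne; exact absurd ⟨Op.init, by decide⟩ hne
      · exact absurd hi (by decide)
  · exact mk_seq1 (by decide)
  · intro i; rfl
  · exact mk_prt1 (by decide)
  · intro i hi hc; exact absurd hc (no_com (by decide) i)
  · intro i hi _
    rcases inTxn_12 (by decide) hi with rfl | rfl
    · exact ⟨fun _ => False, by
        rw [luvis_T1_only (by decide)]; exact isLegal_noval (by decide)⟩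
    · exact absurd hi (by decide)

lemma fso2 : finalStateLUOpaque EE [E0, E1] := by
  refine ⟨[E0, E1, C1E, A1E], [E0, E1, C1E, A1E], ?_, ?_, ?_, ?_, ?_, ?_⟩
  · refine ⟨⟨[C1E, A1E], rfl⟩, ?_, ?_, ?_⟩
    · intro i hi
      rcases inTxn_12 (by decide) hi with rfl | rfl
      · decide
      · exact absurd hi (by decide)
    · intro i hi
      rcases inTxn_12 (by decide) hi with rfl | rfl
      · exact Or.inr (by decide)
      · exact absurd hi (by decide)
    · intro i hi
      rcases inTxn_12 (by decide) hi with rfl | rfl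
      · refine ⟨?_, ?_⟩
        · rintro (h | h)
          · exact absurd h (no_com (by decide) 1)
          · exact absurd h (by decide)
        · intro _ _
          refine ⟨?_, ?_, ?_⟩
          · intro hp; exact absurd hp (by decide)
          · rintro ⟨o, -, hp⟩; exact absurd hp (no_pend ⟨1, Resp.ok, by decide⟩ o)
          · intro _; decide
      · exact absurd hi (by decide)
  · exact mk_seq1 (by decide)
  · intro i; rfl
  · exact mk_prt1 (by decide)
  · intro i hi hc; exact absurd hc (no_com (by decide) i)
  · intro i hi _
    rcases inTxn_12 (by decide) hi with rfl | rfl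
    · exact ⟨fun _ => False, by
        rw [luvis_T1_only (by decide)]; exact isLegal_noval (by decide)⟩
    · exact absurd hi (by decide)

lemma fso3 : finalStateLUOpaque EE [E0, E1, E2] := by
  have hrt : rtPrec ([E0, E1, C1E, A1E, E2, A2E] : History) 1 2 :=
    mk_rt12 3 ⟨A1E, by decide, by decide⟩ ⟨E2, by decide, by decide⟩
      (all_idx (by decide)) (all_idx (by decide))
  refine ⟨[E0, E1, E2, C1E, A1E, A2E], [E0, E1, C1E, A1E, E2, A2E], ?_, ?_, ?_, ?_, ?_, ?_⟩
  · refine ⟨⟨[C1E, A1E, A2E], rfl⟩, ?_, ?_, ?_⟩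
    · intro i hi
      rcases inTxn_12 (by decide) hi with rfl | rfl
      · decide
      · decide
    · intro i hi
      rcases inTxn_12 (by decide) hi with rfl | rfl
      · exact Or.inr (by decide)
      · exact Or.inr (by decide)
    · intro i hi
      rcases inTxn_12 (by decide) hi with rfl | rfl
      · refine ⟨?_, ?_⟩
        · rintro (h | h)
          · exact absurd h (no_com (by decide) 1)
          · exact absurd h (by decide)
        · intro _ _
          refine ⟨?_, ?_, ?_⟩
          · intro hp; exact absurd hp (by decide)
          · rintro ⟨o, -, hp⟩; exact absurd hp (no_pend ⟨1, Resp.ok, by decide⟩ o)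
          · intro _; decide
      · refine ⟨?_, ?_⟩
        · rintro (h | h)
          · exact absurd h (no_com (by decide) 2)
          · exact absurd h (by decide)
        · intro _ _
          refine ⟨?_, ?_, ?_⟩
          · intro hp; exact absurd hp (by decide)
          · intro _; decide
          · intro hne; exact absurd ⟨Op.init, by decide⟩ hne
  · exact mk_seq (by decide) hrt
  · intro i
    by_cases h1 : i = 1
    · subst h1; decide
    · by_cases h2 : i = 2
      · subst h2; decide
      · rw [proj_nil_univ (by decide) h1 h2, proj_nil_univ (by decide) h1 h2]
  · exact mk_prt (by decide) ⟨E0, by decide, by decide⟩ hrt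
  · intro i hi hc; exact absurd hc (no_com (by decide) i)
  · intro i hi _
    rcases inTxn_12 (by decide) hi with rfl | rfl
    · exact ⟨fun _ => False, by
        rw [luvis_T1_two (by decide) (no_com (by decide) 2)]; exact isLegal_noval (by decide)⟩
    · exact ⟨fun _ => False, by
        rw [luvis_T2_two (by decide) (no_com (by decide) 1)]; exact isLegal_noval (by decide)⟩

lemma fso4 : finalStateLUOpaque EE [E0, E1, E2, E3] := by
  have hrt : rtPrec ([E0, E1, C1E, A1E, E2, E3, C2E, A2E] : History) 1 2 :=
    mk_rt12 3 ⟨A1E, by decide, by decide⟩ ⟨E2, by decide, by decide⟩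
      (all_idx (by decide)) (all_idx (by decide))
  refine ⟨[E0, E1, E2, E3, C1E, A1E, C2E, A2E], [E0, E1, C1E, A1E, E2, E3, C2E, A2E], ?_, ?_, ?_, ?_, ?_, ?_⟩
  · refine ⟨⟨[C1E, A1E, C2E, A2E], rfl⟩, ?_, ?_, ?_⟩
    · intro i hi
      rcases inTxn_12 (by decide) hi with rfl | rfl
      · decide
      · decide
    · intro i hi
      rcases inTxn_12 (by decide) hi with rfl | rfl
      · exact Or.inr (by decide)
      · exact Or.inr (by decide)
    · intro i hi
      rcases inTxn_12 (by decide) hi with rfl | rfl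
      · refine ⟨?_, ?_⟩
        · rintro (h | h)
          · exact absurd h (no_com (by decide) 1)
          · exact absurd h (by decide)
        · intro _ _
          refine ⟨?_, ?_, ?_⟩
          · intro hp; exact absurd hp (by decide)
          · rintro ⟨o, -, hp⟩; exact absurd hp (no_pend ⟨1, Resp.ok, by decide⟩ o)
          · intro _; decide
      · refine ⟨?_, ?_⟩
        · rintro (h | h)
          · exact absurd h (no_com (by decide) 2)
          · exact absurd h (by decide)
        · intro _ _
          refine ⟨?_, ?_, ?_⟩
          · intro hp; exact absurd hp (by decide)
          · rintro ⟨o, -, hp⟩; exact absurd hp (no_pend ⟨2, Resp.ok, by decide⟩ o)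
          · intro _; decide
  · exact mk_seq (by decide) hrt
  · intro i
    by_cases h1 : i = 1
    · subst h1; decide
    · by_cases h2 : i = 2
      · subst h2; decide
      · rw [proj_nil_univ (by decide) h1 h2, proj_nil_univ (by decide) h1 h2]
  · exact mk_prt (by decide) ⟨E0, by decide, by decide⟩ hrt
  · intro i hi hc; exact absurd hc (no_com (by decide) i)
  · intro i hi _
    rcases inTxn_12 (by decide) hi with rfl | rfl
    · exact ⟨fun _ => False, by
        rw [luvis_T1_two (by decide) (no_com (by decide) 2)]; exact isLegal_noval (by decide)⟩
    · exact ⟨fun _ => False, by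
        rw [luvis_T2_two (by decide) (no_com (by decide) 1)]; exact isLegal_noval (by decide)⟩

lemma fso5 : finalStateLUOpaque EE [E0, E1, E2, E3, E4] := by
  have hrt : rtPrec ([E0, E1, E4, A1E, E2, E3, C2E, A2E] : History) 1 2 :=
    mk_rt12 3 ⟨A1E, by decide, by decide⟩ ⟨E2, by decide, by decide⟩
      (all_idx (by decide)) (all_idx (by decide))
  refine ⟨[E0, E1, E2, E3, E4, A1E, C2E, A2E], [E0, E1, E4, A1E, E2, E3, C2E, A2E], ?_, ?_, ?_, ?_, ?_, ?_⟩
  · refine ⟨⟨[A1E, C2E, A2E], rfl⟩, ?_, ?_, ?_⟩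
    · intro i hi
      rcases inTxn_12 (by decide) hi with rfl | rfl
      · decide
      · decide
    · intro i hi
      rcases inTxn_12 (by decide) hi with rfl | rfl
      · exact Or.inr (by decide)
      · exact Or.inr (by decide)
    · intro i hi
      rcases inTxn_12 (by decide) hi with rfl | rfl
      · refine ⟨?_, ?_⟩
        · rintro (h | h)
          · exact absurd h (no_com (by decide) 1)
          · exact absurd h (by decide)
        · intro _ _
          refine ⟨?_, ?_, ?_⟩
          · intro hp; exact absurd hp (by decide)
          · intro _; decide
          · intro hne; exact absurd ⟨Op.write 0 1, by decide⟩ hne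
      · refine ⟨?_, ?_⟩
        · rintro (h | h)
          · exact absurd h (no_com (by decide) 2)
          · exact absurd h (by decide)
        · intro _ _
          refine ⟨?_, ?_, ?_⟩
          · intro hp; exact absurd hp (by decide)
          · rintro ⟨o, -, hp⟩; exact absurd hp (no_pend ⟨2, Resp.ok, by decide⟩ o)
          · intro _; decide
  · exact mk_seq (by decide) hrt
  · intro i
    by_cases h1 : i = 1
    · subst h1; decide
    · by_cases h2 : i = 2
      · subst h2; decide
      · rw [proj_nil_univ (by decide) h1 h2, proj_nil_univ (by decide) h1 h2]
  · exact mk_prt (by decide) ⟨E0, by decide, by decide⟩ hrt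
  · intro i hi hc; exact absurd hc (no_com (by decide) i)
  · intro i hi _
    rcases inTxn_12 (by decide) hi with rfl | rfl
    · exact ⟨fun _ => False, by
        rw [luvis_T1_two (by decide) (no_com (by decide) 2)]; exact isLegal_noval (by decide)⟩
    · exact ⟨fun _ => False, by
        rw [luvis_T2_two (by decide) (no_com (by decide) 1)]; exact isLegal_noval (by decide)⟩

lemma fso6 : finalStateLUOpaque EE [E0, E1, E2, E3, E4, E5] := by
  have hrt : rtPrec ([E0, E1, E4, E5, C1E, A1E, E2, E3, C2E, A2E] : History) 1 2 :=
    mk_rt12 5 ⟨A1E, by decide, by decide⟩ ⟨E2, by decide, by decide⟩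
      (all_idx (by decide)) (all_idx (by decide))
  refine ⟨[E0, E1, E2, E3, E4, E5, C1E, A1E, C2E, A2E], [E0, E1, E4, E5, C1E, A1E, E2, E3, C2E, A2E], ?_, ?_, ?_, ?_, ?_, ?_⟩
  · refine ⟨⟨[C1E, A1E, C2E, A2E], rfl⟩, ?_, ?_, ?_⟩
    · intro i hi
      rcases inTxn_12 (by decide) hi with rfl | rfl
      · decide
      · decide
    · intro i hi
      rcases inTxn_12 (by decide) hi with rfl | rfl
      · exact Or.inr (by decide)
      · exact Or.inr (by decide)
    · intro i hi
      rcases inTxn_12 (by decide) hi with rfl | rfl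
      · refine ⟨?_, ?_⟩
        · rintro (h | h)
          · exact absurd h (no_com (by decide) 1)
          · exact absurd h (by decide)
        · intro _ _
          refine ⟨?_, ?_, ?_⟩
          · intro hp; exact absurd hp (by decide)
          · rintro ⟨o, -, hp⟩; exact absurd hp (no_pend ⟨1, Resp.ok, by decide⟩ o)
          · intro _; decide
      · refine ⟨?_, ?_⟩
        · rintro (h | h)
          · exact absurd h (no_com (by decide) 2)
          · exact absurd h (by decide)
        · intro _ _
          refine ⟨?_, ?_, ?_⟩
          · intro hp; exact absurd hp (by decide)
          · rintro ⟨o, -, hp⟩; exact absurd hp (no_pend ⟨2, Resp.ok, by decide⟩ o)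
          · intro _; decide
  · exact mk_seq (by decide) hrt
  · intro i
    by_cases h1 : i = 1
    · subst h1; decide
    · by_cases h2 : i = 2
      · subst h2; decide
      · rw [proj_nil_univ (by decide) h1 h2, proj_nil_univ (by decide) h1 h2]
  · exact mk_prt (by decide) ⟨E0, by decide, by decide⟩ hrt
  · intro i hi hc; exact absurd hc (no_com (by decide) i)
  · intro i hi _
    rcases inTxn_12 (by decide) hi with rfl | rfl
    · exact ⟨fun _ => False, by
        rw [luvis_T1_two (by decide) (no_com (by decide) 2)]; exact isLegal_noval (by decide)⟩
    · exact ⟨fun _ => False, by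
        rw [luvis_T2_two (by decide) (no_com (by decide) 1)]; exact isLegal_noval (by decide)⟩

lemma fso7 : finalStateLUOpaque EE [E0, E1, E2, E3, E4, E5, E6] := by
  have hrt : rtPrec ([E0, E1, E4, E5, C1E, A1E, E2, E3, E6, A2E] : History) 1 2 :=
    mk_rt12 5 ⟨A1E, by decide, by decide⟩ ⟨E2, by decide, by decide⟩
      (all_idx (by decide)) (all_idx (by decide))
  refine ⟨[E0, E1, E2, E3, E4, E5, E6, A2E, C1E, A1E], [E0, E1, E4, E5, C1E, A1E, E2, E3, E6, A2E], ?_, ?_, ?_, ?_, ?_, ?_⟩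
  · refine ⟨⟨[A2E, C1E, A1E], rfl⟩, ?_, ?_, ?_⟩
    · intro i hi
      rcases inTxn_12 (by decide) hi with rfl | rfl
      · decide
      · decide
    · intro i hi
      rcases inTxn_12 (by decide) hi with rfl | rfl
      · exact Or.inr (by decide)
      · exact Or.inr (by decide)
    · intro i hi
      rcases inTxn_12 (by decide) hi with rfl | rfl
      · refine ⟨?_, ?_⟩
        · rintro (h | h)
          · exact absurd h (no_com (by decide) 1)
          · exact absurd h (by decide)
        · intro _ _
          refine ⟨?_, ?_, ?_⟩
          · intro hp; exact absurd hp (by decide)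
          · rintro ⟨o, -, hp⟩; exact absurd hp (no_pend ⟨1, Resp.ok, by decide⟩ o)
          · intro _; decide
      · refine ⟨?_, ?_⟩
        · rintro (h | h)
          · exact absurd h (no_com (by decide) 2)
          · exact absurd h (by decide)
        · intro _ _
          refine ⟨?_, ?_, ?_⟩
          · intro hp; exact absurd hp (by decide)
          · intro _; decide
          · intro hne; exact absurd ⟨Op.read 0, by decide⟩ hne
  · exact mk_seq (by decide) hrt
  · intro i
    by_cases h1 : i = 1
    · subst h1; decide
    · by_cases h2 : i = 2
      · subst h2; decide
      · rw [proj_nil_univ (by decide) h1 h2, proj_nil_univ (by decide) h1 h2]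
  · exact mk_prt (by decide) ⟨E0, by decide, by decide⟩ hrt
  · intro i hi hc; exact absurd hc (no_com (by decide) i)
  · intro i hi _
    rcases inTxn_12 (by decide) hi with rfl | rfl
    · exact ⟨fun _ => False, by
        rw [luvis_T1_two (by decide) (no_com (by decide) 2)]; exact isLegal_noval (by decide)⟩
    · exact ⟨fun _ => False, by
        rw [luvis_T2_two (by decide) (no_com (by decide) 1)]; exact isLegal_noval (by decide)⟩

lemma fso8 : finalStateLUOpaque EE [E0, E1, E2, E3, E4, E5, E6, E7] := by
  have hrt : rtPrec ([E0, E1, E4, E5, C1E, A1E, E2, E3, E6, E7, C2E, A2E] : History) 1 2 :=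
    mk_rt12 5 ⟨A1E, by decide, by decide⟩ ⟨E2, by decide, by decide⟩
      (all_idx (by decide)) (all_idx (by decide))
  refine ⟨[E0, E1, E2, E3, E4, E5, E6, E7, C1E, A1E, C2E, A2E], [E0, E1, E4, E5, C1E, A1E, E2, E3, E6, E7, C2E, A2E], ?_, ?_, ?_, ?_, ?_, ?_⟩
  · refine ⟨⟨[C1E, A1E, C2E, A2E], rfl⟩, ?_, ?_, ?_⟩
    · intro i hi
      rcases inTxn_12 (by decide) hi with rfl | rfl
      · decide
      · decide
    · intro i hi
      rcases inTxn_12 (by decide) hi with rfl | rfl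
      · exact Or.inr (by decide)
      · exact Or.inr (by decide)
    · intro i hi
      rcases inTxn_12 (by decide) hi with rfl | rfl
      · refine ⟨?_, ?_⟩
        · rintro (h | h)
          · exact absurd h (no_com (by decide) 1)
          · exact absurd h (by decide)
        · intro _ _
          refine ⟨?_, ?_, ?_⟩
          · intro hp; exact absurd hp (by decide)
          · rintro ⟨o, -, hp⟩; exact absurd hp (no_pend ⟨1, Resp.ok, by decide⟩ o)
          · intro _; decide
      · refine ⟨?_, ?_⟩
        · rintro (h | h)
          · exact absurd h (no_com (by decide) 2)
          · exact absurd h (by decide)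
        · intro _ _
          refine ⟨?_, ?_, ?_⟩
          · intro hp; exact absurd hp (by decide)
          · rintro ⟨o, -, hp⟩; exact absurd hp (no_pend ⟨2, Resp.value 1, by decide⟩ o)
          · intro _; decide
  · exact mk_seq (by decide) hrt
  · intro i
    by_cases h1 : i = 1
    · subst h1; decide
    · by_cases h2 : i = 2
      · subst h2; decide
      · rw [proj_nil_univ (by decide) h1 h2, proj_nil_univ (by decide) h1 h2]
  · exact mk_prt (by decide) ⟨E0, by decide, by decide⟩ hrt
  · intro i hi hc; exact absurd hc (no_com (by decide) i)
  · intro i hi _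
    rcases inTxn_12 (by decide) hi with rfl | rfl
    · exact ⟨fun _ => False, by
        rw [luvis_T1_two (by decide) (no_com (by decide) 2)]; exact isLegal_noval (by decide)⟩
    · refine ⟨fun j => j = 1, ?_⟩
      have hd : decidedOn EE [E0, E1, E2, E3, E4, E5, E6, E7] 1 0 := decided_1_0 (by decide) (by decide)
      have hrtP : ¬ rtPrec [E0, E1, E2, E3, E4, E5, E6, E7] 1 2 := by
        rintro ⟨k, l, hkl, -, -, h1, h2⟩
        have ha := h1 4 E4 (by decide) (by decide)
        have hb := h2 2 E2 (by decide) (by decide)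
        omega
      rw [luvis_hard (by decide) (no_com (by decide) 1) hd hrt hrtP]
      have hl : lastUseProjC EE [E0, E1, E2, E3, E4, E5, E6, E7] [E0, E1, E4, E5, C1E, A1E, E2, E3, E6, E7, C2E, A2E] 1 =
          [E0, E1, E4, E5] ++ [Event.inv 1 Op.tryCommit, Event.res 1 Resp.committed] := by
        unfold lastUseProjC
        rw [lup_comp EE [E0, E1, E2, E3, E4, E5, E6, E7] [E0, E1, E4, E5, C1E, A1E, E2, E3, E6, E7, C2E, A2E] C1E A1E (by decide) (by decide) (by decide) hd]
      rw [hl, show proj 2 ([E0, E1, E4, E5, C1E, A1E, E2, E3, E6, E7, C2E, A2E] : History) = [E2, E3, E6, E7, C2E, A2E] from by decide]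
      exact isLegal_final

lemma fso9 : finalStateLUOpaque EE [E0, E1, E2, E3, E4, E5, E6, E7, E8] := by
  have hrt : rtPrec ([E0, E1, E4, E5, E8, A1E, E2, E3, E6, E7, C2E, A2E] : History) 1 2 :=
    mk_rt12 5 ⟨A1E, by decide, by decide⟩ ⟨E2, by decide, by decide⟩
      (all_idx (by decide)) (all_idx (by decide))
  refine ⟨[E0, E1, E2, E3, E4, E5, E6, E7, E8, A1E, C2E, A2E], [E0, E1, E4, E5, E8, A1E, E2, E3, E6, E7, C2E, A2E], ?_, ?_, ?_, ?_, ?_, ?_⟩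
  · refine ⟨⟨[A1E, C2E, A2E], rfl⟩, ?_, ?_, ?_⟩
    · intro i hi
      rcases inTxn_12 (by decide) hi with rfl | rfl
      · decide
      · decide
    · intro i hi
      rcases inTxn_12 (by decide) hi with rfl | rfl
      · exact Or.inr (by decide)
      · exact Or.inr (by decide)
    · intro i hi
      rcases inTxn_12 (by decide) hi with rfl | rfl
      · refine ⟨?_, ?_⟩
        · rintro (h | h)
          · exact absurd h (no_com (by decide) 1)
          · exact absurd h (by decide)
        · intro _ _
          refine ⟨?_, ?_, ?_⟩
          · intro hp; exact absurd hp (by decide)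
          · intro _; decide
          · intro hne; exact absurd ⟨Op.tryAbort, by decide⟩ hne
      · refine ⟨?_, ?_⟩
        · rintro (h | h)
          · exact absurd h (no_com (by decide) 2)
          · exact absurd h (by decide)
        · intro _ _
          refine ⟨?_, ?_, ?_⟩
          · intro hp; exact absurd hp (by decide)
          · rintro ⟨o, -, hp⟩; exact absurd hp (no_pend ⟨2, Resp.value 1, by decide⟩ o)
          · intro _; decide
  · exact mk_seq (by decide) hrt
  · intro i
    by_cases h1 : i = 1
    · subst h1; decide
    · by_cases h2 : i = 2
      · subst h2; decide
      · rw [proj_nil_univ (by decide) h1 h2, proj_nil_univ (by decide) h1 h2]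
  · exact mk_prt (by decide) ⟨E0, by decide, by decide⟩ hrt
  · intro i hi hc; exact absurd hc (no_com (by decide) i)
  · intro i hi _
    rcases inTxn_12 (by decide) hi with rfl | rfl
    · exact ⟨fun _ => False, by
        rw [luvis_T1_two (by decide) (no_com (by decide) 2)]; exact isLegal_noval (by decide)⟩
    · refine ⟨fun j => j = 1, ?_⟩
      have hd : decidedOn EE [E0, E1, E2, E3, E4, E5, E6, E7, E8] 1 0 := decided_1_0 (by decide) (by decide)
      have hrtP : ¬ rtPrec [E0, E1, E2, E3, E4, E5, E6, E7, E8] 1 2 := by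
        rintro ⟨k, l, hkl, -, -, h1, h2⟩
        have ha := h1 4 E4 (by decide) (by decide)
        have hb := h2 2 E2 (by decide) (by decide)
        omega
      rw [luvis_hard (by decide) (no_com (by decide) 1) hd hrt hrtP]
      have hl : lastUseProjC EE [E0, E1, E2, E3, E4, E5, E6, E7, E8] [E0, E1, E4, E5, E8, A1E, E2, E3, E6, E7, C2E, A2E] 1 =
          [E0, E1, E4, E5] ++ [Event.inv 1 Op.tryCommit, Event.res 1 Resp.committed] := by
        unfold lastUseProjC
        rw [lup_comp EE [E0, E1, E2, E3, E4, E5, E6, E7, E8] [E0, E1, E4, E5, E8, A1E, E2, E3, E6, E7, C2E, A2E] E8 A1E (by decide) (by decide) (by decide) hd]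
      rw [hl, show proj 2 ([E0, E1, E4, E5, E8, A1E, E2, E3, E6, E7, C2E, A2E] : History) = [E2, E3, E6, E7, C2E, A2E] from by decide]
      exact isLegal_final

lemma fso10 : finalStateLUOpaque EE [E0, E1, E2, E3, E4, E5, E6, E7, E8, E9] := by
  have hrt : rtPrec ([E0, E1, E4, E5, E8, E9, E2, E3, E6, E7, C2E, A2E] : History) 1 2 :=
    mk_rt12 5 ⟨E9, by decide, by decide⟩ ⟨E2, by decide, by decide⟩
      (all_idx (by decide)) (all_idx (by decide))
  refine ⟨[E0, E1, E2, E3, E4, E5, E6, E7, E8, E9, C2E, A2E], [E0, E1, E4, E5, E8, E9, E2, E3, E6, E7, C2E, A2E], ?_, ?_, ?_, ?_, ?_, ?_⟩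
  · refine ⟨⟨[C2E, A2E], rfl⟩, ?_, ?_, ?_⟩
    · intro i hi
      rcases inTxn_12 (by decide) hi with rfl | rfl
      · decide
      · decide
    · intro i hi
      rcases inTxn_12 (by decide) hi with rfl | rfl
      · exact Or.inr (by decide)
      · exact Or.inr (by decide)
    · intro i hi
      rcases inTxn_12 (by decide) hi with rfl | rfl
      · refine ⟨?_, ?_⟩
        · intro _; decide
        · intro _ hna; exact absurd (by decide) hna
      · refine ⟨?_, ?_⟩
        · rintro (h | h)
          · exact absurd h (no_com (by decide) 2)
          · exact absurd h (by decide)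
        · intro _ _
          refine ⟨?_, ?_, ?_⟩
          · intro hp; exact absurd hp (by decide)
          · rintro ⟨o, -, hp⟩; exact absurd hp (no_pend ⟨2, Resp.value 1, by decide⟩ o)
          · intro _; decide
  · exact mk_seq (by decide) hrt
  · intro i
    by_cases h1 : i = 1
    · subst h1; decide
    · by_cases h2 : i = 2
      · subst h2; decide
      · rw [proj_nil_univ (by decide) h1 h2, proj_nil_univ (by decide) h1 h2]
  · exact mk_prt (by decide) ⟨E0, by decide, by decide⟩ hrt
  · intro i hi hc; exact absurd hc (no_com (by decide) i)
  · intro i hi _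
    rcases inTxn_12 (by decide) hi with rfl | rfl
    · exact ⟨fun _ => False, by
        rw [luvis_T1_two (by decide) (no_com (by decide) 2)]; exact isLegal_noval (by decide)⟩
    · refine ⟨fun j => j = 1, ?_⟩
      have hd : decidedOn EE [E0, E1, E2, E3, E4, E5, E6, E7, E8, E9] 1 0 := decided_1_0 (by decide) (by decide)
      have hrtP : ¬ rtPrec [E0, E1, E2, E3, E4, E5, E6, E7, E8, E9] 1 2 := by
        rintro ⟨k, l, hkl, -, -, h1, h2⟩
        have ha := h1 4 E4 (by decide) (by decide)
        have hb := h2 2 E2 (by decide) (by decide)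
        omega
      rw [luvis_hard (by decide) (no_com (by decide) 1) hd hrt hrtP]
      have hl : lastUseProjC EE [E0, E1, E2, E3, E4, E5, E6, E7, E8, E9] [E0, E1, E4, E5, E8, E9, E2, E3, E6, E7, C2E, A2E] 1 =
          [E0, E1, E4, E5] ++ [Event.inv 1 Op.tryCommit, Event.res 1 Resp.committed] := by
        unfold lastUseProjC
        rw [lup_comp EE [E0, E1, E2, E3, E4, E5, E6, E7, E8, E9] [E0, E1, E4, E5, E8, E9, E2, E3, E6, E7, C2E, A2E] E8 E9 (by decide) (by decide) (by decide) hd]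
      rw [hl, show proj 2 ([E0, E1, E4, E5, E8, E9, E2, E3, E6, E7, C2E, A2E] : History) = [E2, E3, E6, E7, C2E, A2E] from by decide]
      exact isLegal_final



/-- Last-use opacity supports aborting early release: there
exist a prefix-closed set `E` of histories and a (well-formed, unique-writes)
history `H ∈ E` that is last-use opaque w.r.t. `E` and contains a transaction
`T_i` that releases some variable early in `H` and whose subhistory `H|T_i`
contains the abort response `A_i`. -/
theorem lastUse_opacity_supports_aborting_early_release :
    ∃ (E : Set History) (H : History) (i x : ℕ),
      prefixClosed E ∧ H ∈ E ∧ wellFormed H ∧ uniqueWrites H ∧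
      lastUseOpaque E H ∧ releasesEarly H i x ∧
      Event.res i Resp.aborted ∈ proj i H := by
  refine ⟨EE, Hex, 1, 0, ?_, ?_, ?_, ?_, ?_, ?_, ?_⟩
  · intro H hH P hP; exact hP.trans hH
  · exact List.prefix_refl _
  · -- wellFormed
    intro i
    by_cases h1 : i = 1
    · subst h1
      refine ⟨?_, ?_, ?_, ?_⟩
      · exact all_idx (L := proj 1 Hex)
          (Q := fun k e => (k % 2 = 0 → isInvEvent e) ∧ (k % 2 = 1 → isResEvent e)) (by decide)
      · intro _; decide
      · intro k h
        rcases h with h | h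
        · have := all_idx (L := proj 1 Hex) (Q := fun m e => isCom e = false) (by decide) k _ h
          simp [isCom] at this
        · have h5 := all_idx (L := proj 1 Hex) (Q := fun m e => isAb e = true → m = 5)
            (by decide) k _ h rfl
          subst h5; decide
      · intro k o hk ho m o' hm
        have hk4 : k = 4 := all_idx (L := proj 1 Hex) (Q := fun m e => isTCA e = true → m = 4)
          (by decide) k _ hk (by rcases ho with rfl | rfl <;> rfl)
        have hm4 := all_idx (L := proj 1 Hex) (Q := fun m e => isInvB e = true → m ≤ 4)
          (by decide) m _ hm rfl
        omega
    · by_cases h2 : i = 2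
      · subst h2
        refine ⟨?_, ?_, ?_, ?_⟩
        · exact all_idx (L := proj 2 Hex)
            (Q := fun k e => (k % 2 = 0 → isInvEvent e) ∧ (k % 2 = 1 → isResEvent e)) (by decide)
        · intro _; decide
        · intro k h
          rcases h with h | h
          · have := all_idx (L := proj 2 Hex) (Q := fun m e => isCom e = false) (by decide) k _ h
            simp [isCom] at this
          · have := all_idx (L := proj 2 Hex) (Q := fun m e => isAb e = false) (by decide) k _ h
            simp [isAb] at this
        · intro k o hk ho m o' hm
          have := all_idx (L := proj 2 Hex) (Q := fun m e => isTCA e = false) (by decide) k _ hk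
          rcases ho with rfl | rfl <;> simp [isTCA] at this
      · rw [proj_nil_univ (by decide) h1 h2]
        refine ⟨?_, ?_, ?_, ?_⟩
        · intro k e h; simp at h
        · intro h; exact absurd rfl h
        · intro k h; rcases h with h | h <;> simp at h
        · intro k o h; simp at h
  · -- uniqueWrites
    intro k1 k2 i1 i2 x1 x2 v1 v2 hA hB
    have e1 : k1 = 4 := all_idx (L := Hex) (Q := fun m e => isWr e = true → m = 4)
      (by decide) k1 _ hA rfl
    have e2 : k2 = 4 := all_idx (L := Hex) (Q := fun m e => isWr e = true → m = 4)
      (by decide) k2 _ hB rfl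
    subst e1; subst e2
    have h4 : Hex[4]? = some (Event.inv 1 (Op.write 0 1)) := by decide
    rw [h4] at hA hB
    simp only [Option.some.injEq, Event.inv.injEq, Op.write.injEq] at hA hB
    obtain ⟨-, -, hv1⟩ := hA
    exact ⟨by omega, fun hne => absurd rfl hne⟩
  · -- lastUseOpaque
    intro P hP
    have hlen : P.length ≤ 10 := by simpa [Hex] using hP.length_le
    obtain ⟨n, hn, rfl⟩ : ∃ n, n ≤ 10 ∧ P = Hex.take n :=
      ⟨P.length, hlen, List.prefix_iff_eq_take.mp hP⟩
    interval_cases n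
    exacts [fso0, fso1, fso2, fso3, fso4, fso5, fso6, fso7, fso8, fso9, fso10]
  · -- releasesEarly
    refine ⟨[E0, E1, E2, E3, E4, E5, E6, E7], ⟨[E8, E9], rfl⟩, ?_, 2, 1, 4, 5, 6, 7,
      by omega, ?_, ?_, ?_, by omega⟩
    · refine ⟨by decide, no_com (by decide) 1, by decide, ?_⟩
      rintro ⟨hm, -⟩
      exact absurd hm (by decide)
    · exact ⟨by omega, by decide, by decide, fun m e hm1 hm2 _ => absurd hm1 (by omega)⟩
    · exact ⟨by omega, by decide, by decide, fun m e hm1 hm2 _ => absurd hm1 (by omega)⟩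
    · intro m v hm hc
      have hm4 : m = 4 := all_idx (L := [E0, E1, E2, E3, E4, E5, E6, E7])
        (Q := fun m e => isWr e = true → m = 4) (by decide) m _ hc rfl
      subst hm4
      have h4 : ([E0, E1, E2, E3, E4, E5, E6, E7] : History)[4]? =
          some (Event.inv 1 (Op.write 0 1)) := by decide
      rw [h4] at hc
      simp at hc
  · decide




end TM
end

section
/- Every final-state opaque history is final-state last-use opaque: for every prefix-closed set 𝓔 of histories and every finite H ∈ 𝓔, if H is final-state opaque, then H is final-state last-use opaque with respect to 𝓔. -/
namespace TM

open Classical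

/-- No two transactions interleave: convexity of transaction event blocks. -/
private def Grouped (S : History) : Prop :=
  ∀ k l m : ℕ, k < l → l < m → ∀ ek el em : Event,
    S[k]? = some ek → S[l]? = some el → S[m]? = some em →
    ek.txn = em.txn → el.txn = ek.txn

private lemma mem_of_getElem?' {S : History} {k : ℕ} {e : Event}
    (h : S[k]? = some e) : e ∈ S := List.mem_of_getElem? h

private lemma getElem?_of_mem' {S : History} {e : Event} (h : e ∈ S) :
    ∃ k : ℕ, S[k]? = some e := by
  obtain ⟨n, hn, h⟩ := List.getElem_of_mem h
  exact ⟨n, by simp [List.getElem?_eq_getElem, hn, h]⟩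

private lemma inTxn_of_mem {S : History} {e : Event} (h : e ∈ S) : inTxn S e.txn := by
  intro hnil
  have : e ∈ proj e.txn S := by
    unfold proj
    exact List.mem_filter.mpr ⟨h, by simp⟩
  rw [hnil] at this
  simp at this

private lemma grouped_of_sequential {S : History} (h : sequential S) : Grouped S := by
  intro k l m hkl hlm ek el em hk hl hm htxn
  by_contra hne
  have hik : inTxn S ek.txn := inTxn_of_mem (mem_of_getElem?' hk)
  have hil : inTxn S el.txn := inTxn_of_mem (mem_of_getElem?' hl)
  rcases h ek.txn el.txn hik hil (fun hh => hne hh.symm) with hp | hp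
  · obtain ⟨k', l', hk'l', _, _, hmax, hmin⟩ := hp
    have h1 : m ≤ k' := hmax m em hm (htxn.symm)
    have h2 : l' ≤ l := hmin l el hl rfl
    omega
  · obtain ⟨k', l', hk'l', _, _, hmax, hmin⟩ := hp
    have h1 : l ≤ k' := hmax l el hl rfl
    have h2 : l' ≤ k := hmin k ek hk rfl
    omega

private lemma getElem?_append_right' {l1 l2 : History} (k : ℕ) :
    (l1 ++ l2)[l1.length + k]? = l2[k]? := by
  rw [List.getElem?_append_right (Nat.le_add_right _ _)]
  simp

private lemma grouped_append_right {l1 l2 : History} (h : Grouped (l1 ++ l2)) :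
    Grouped l2 := by
  intro k l m hkl hlm ek el em hk hl hm htxn
  refine h (l1.length + k) (l1.length + l) (l1.length + m) (by omega) (by omega)
    ek el em ?_ ?_ ?_ htxn
  · rw [getElem?_append_right']; exact hk
  · rw [getElem?_append_right']; exact hl
  · rw [getElem?_append_right']; exact hm

private lemma txn_mem_of_mem_txnOrder {L : History} {j : ℕ} (h : j ∈ txnOrder L) :
    ∃ e ∈ L, e.txn = j := by
  induction L with
  | nil => simp [txnOrder] at h
  | cons e t ih =>
    rw [txnOrder] at h
    rcases List.mem_cons.mp h with h | h
    · exact ⟨e, by simp, h.symm⟩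
    · obtain ⟨e', he', ht⟩ := ih (List.mem_of_mem_filter h)
      exact ⟨e', by simp [he'], ht⟩

private lemma dropWhile_getZero {p : Event → Bool} :
    ∀ {l : History} {e : Event}, (l.dropWhile p)[0]? = some e → p e = false := by
  intro l
  induction l with
  | nil => intro e h; simp [List.dropWhile] at h
  | cons b t ih =>
    intro e h
    by_cases hb : p b
    · rw [List.dropWhile_cons_of_pos hb] at h; exact ih h
    · rw [List.dropWhile_cons_of_neg hb] at h
      simp at h; rw [← h]; simpa using hb

private lemma txnOrder_block {a : ℕ} :
    ∀ (block rest : History), block ≠ [] → (∀ e ∈ block, e.txn = a) →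
    (∀ e ∈ rest, e.txn ≠ a) → txnOrder (block ++ rest) = a :: txnOrder rest := by
  have hfilt : ∀ rest : History, (∀ e ∈ rest, e.txn ≠ a) →
      (txnOrder rest).filter (fun j => j ≠ a) = txnOrder rest := by
    intro rest hrest
    apply List.filter_eq_self.mpr
    intro j hj
    obtain ⟨e, he, het⟩ := txn_mem_of_mem_txnOrder hj
    simp [← het]
    exact hrest e he
  intro block
  induction block with
  | nil => intro rest h; exact absurd rfl h
  | cons b bt ih =>
    intro rest _ hall hrest
    have hb : b.txn = a := hall b (by simp)
    have hstep : txnOrder ((b :: bt) ++ rest) =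
        a :: (txnOrder (bt ++ rest)).filter (fun j => j ≠ a) := by
      rw [List.cons_append, txnOrder, hb]
    rcases eq_or_ne bt ([] : History) with hbt | hbt
    · subst hbt
      rw [hstep, List.nil_append, hfilt rest hrest]
    · rw [hstep, ih rest hbt (fun e he => hall e (by simp [he])) hrest,
        List.filter_cons]
      rw [if_neg (by simp), hfilt rest hrest]

private lemma filter_eq_of_all {block : History} {a : ℕ} (hall : ∀ e ∈ block, e.txn = a)
    (P : ℕ → Prop) :
    block.filter (fun e => decide (P e.txn)) = if P a then block else [] := by
  by_cases hP : P a
  · rw [if_pos hP]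
    apply List.filter_eq_self.mpr
    intro e he
    simp [hall e he, hP]
  · rw [if_neg hP]
    apply List.filter_eq_nil_iff.mpr
    intro e he
    simp [hall e he, hP]

private lemma proj_append (j : ℕ) (l1 l2 : History) :
    proj j (l1 ++ l2) = proj j l1 ++ proj j l2 := List.filter_append ..

private lemma proj_block_self {block : History} {a : ℕ}
    (hall : ∀ e ∈ block, e.txn = a) : proj a block = block := by
  apply List.filter_eq_self.mpr
  intro e he
  simp [hall e he]

private lemma proj_eq_nil_of_ne {block : History} {j : ℕ}
    (hne : ∀ e ∈ block, e.txn ≠ j) : proj j block = [] := by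
  apply List.filter_eq_nil_iff.mpr
  intro e he
  simp [hne e he]

private lemma flatMap_txnOrder_eq_filter :
    ∀ (n : ℕ) (S : History), S.length ≤ n → Grouped S → ∀ P : ℕ → Prop,
    (txnOrder S).flatMap (fun j => if P j then proj j S else []) =
      S.filter (fun e => decide (P e.txn)) := by
  intro n
  induction n with
  | zero =>
    intro S hlen _ P
    rw [List.length_eq_zero_iff.mp (Nat.le_zero.mp hlen)]
    simp [txnOrder]
  | succ n ih =>
    intro S hlen hg P
    cases S with
    | nil => simp [txnOrder]
    | cons e t =>
      set a := e.txn with ha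
      set p : Event → Bool := fun e' => e'.txn == a with hp
      set block := (e :: t).takeWhile p with hblock
      set rest := (e :: t).dropWhile p with hrest
      have hS : block ++ rest = e :: t := by
        rw [hblock, hrest]; exact List.takeWhile_append_dropWhile (p := p) (l := e :: t)
      have hbne : block ≠ [] := by
        rw [hblock, List.takeWhile_cons_of_pos (by simp [hp, ha])]
        simp
      have hall : ∀ e' ∈ block, e'.txn = a := by
        intro e' he'
        have := List.mem_takeWhile_imp he'
        rw [hp] at this
        simpa using this
      have hblen : 0 < block.length := List.length_pos_iff.mpr hbne
      have hrestne : ∀ e' ∈ rest, e'.txn ≠ a := by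
        intro e' he'
        obtain ⟨k, hk⟩ := getElem?_of_mem' he'
        cases k with
        | zero =>
          have := dropWhile_getZero (p := p) (l := e :: t) (by rw [← hrest]; exact hk)
          rw [hp] at this; simpa using this
        | succ k =>
          obtain ⟨hklt, -⟩ := List.getElem?_eq_some_iff.mp hk
          have h0lt : 0 < rest.length := by omega
          obtain ⟨r0, hr0⟩ : ∃ r0, rest[0]? = some r0 :=
            ⟨rest[0]'h0lt, List.getElem?_eq_getElem h0lt⟩
          have hr0a : r0.txn ≠ a := by
            have := dropWhile_getZero (p := p) (l := e :: t) (by rw [← hrest]; exact hr0)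
            rw [hp] at this; simpa using this
          obtain ⟨b0, hb0g⟩ : ∃ b0, block[0]? = some b0 :=
            ⟨block[0]'hblen, List.getElem?_eq_getElem hblen⟩
          have hb0a : b0.txn = a := hall b0 (mem_of_getElem?' hb0g)
          intro he'a
          have hgS : Grouped (block ++ rest) := by rw [hS]; exact hg
          have h0 : (block ++ rest)[0]? = some b0 := by
            rw [List.getElem?_append_left hblen]; exact hb0g
          have h1 : (block ++ rest)[block.length + 0]? = some r0 := by
            rw [getElem?_append_right']; exact hr0
          have h2 : (block ++ rest)[block.length + (k + 1)]? = some e' := by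
            rw [getElem?_append_right']; exact hk
          have := hgS 0 (block.length + 0) (block.length + (k + 1)) (by omega) (by omega)
            b0 r0 e' h0 h1 h2 (by rw [hb0a, he'a])
          exact hr0a (this.trans hb0a)
      have hgS : Grouped (block ++ rest) := by rw [hS]; exact hg
      have hproja : proj a (block ++ rest) = block := by
        rw [proj_append, proj_block_self hall, proj_eq_nil_of_ne hrestne,
          List.append_nil]
      have hlenrest : rest.length ≤ n := by
        have h1 : block.length + rest.length = (e :: t).length := by
          rw [← List.length_append, hS]
        simp only [List.length_cons] at h1 hlen
        omega
      rw [← hS]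
      rw [txnOrder_block block rest hbne hall hrestne]
      rw [List.flatMap_cons]
      have hcong : (txnOrder rest).flatMap
            (fun j => if P j then proj j (block ++ rest) else []) =
          (txnOrder rest).flatMap (fun j => if P j then proj j rest else []) := by
        apply List.flatMap_congr
        intro j hj
        obtain ⟨e', he', het⟩ := txn_mem_of_mem_txnOrder hj
        have hja : ∀ e'' ∈ block, e''.txn ≠ j := by
          intro e'' he'' hc
          exact hrestne e' he' (het ▸ (hc ▸ hall e'' he''))
        rw [proj_append, proj_eq_nil_of_ne hja, List.nil_append]
      rw [hcong, ih rest hlenrest (grouped_append_right hgS) P]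
      rw [List.filter_append, filter_eq_of_all hall P, hproja]


/-- Every final-state opaque history is final-state
last-use opaque: for every prefix-closed `E` and every finite `H ∈ E`, if `H`
is final-state opaque then `H` is final-state last-use opaque w.r.t. `E`. -/
theorem finalState_opaque_implies_finalState_lastUse_opaque
    (E : Set History) (hE : prefixClosed E) (H : History) (hH : H ∈ E)
    (hfso : finalStateOpaque H) : finalStateLUOpaque E H := by
  obtain ⟨C, S, hC, hseq, hequiv, hrt, hleg⟩ := hfso
  refine ⟨C, S, hC, hseq, hequiv, hrt, fun i hi _ => hleg i hi, fun i hi _ => ?_⟩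
  refine ⟨fun _ => False, ?_⟩
  show isLegal (buildLUVis E H S i fun _ => False)
  have hQ := flatMap_txnOrder_eq_filter S.length S le_rfl (grouped_of_sequential hseq)
      (fun j => j = i ∨ (committed S j ∧ rtPrec S j i))
  have heq : buildLUVis E H S i (fun _ => False) = Vis S i := by
    refine Eq.trans ?_ (Eq.trans hQ ?_)
    · unfold buildLUVis
      apply List.flatMap_congr
      intro j _
      by_cases h1 : j = i ∨ (committed S j ∧ rtPrec S j i)
      · rw [if_pos h1, if_pos h1]
      · rw [if_neg h1, if_neg h1, if_neg]
        rintro ⟨-, -, -, -, hf⟩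
        exact hf
    · unfold Vis restrictTxns
      apply List.filter_congr
      intro e _
      exact decide_eq_decide.mpr Iff.rfl
  rw [heq]
  exact hleg i hi

end TM
end
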